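/- arXiv:0911.5579 — 2 statements merged into one kernel-verified Lean document; each statement's English description precedes it below -/
import Mathlib

section
/- Define K₁ : (0,∞) → ℝ by K₁(y) := ∫_0^∞ e^{−y·cosh u}·cosh u du. Fix parameters μ, θ, b ∈ ℝ and δ > 0 with θ² + μ² > 0, fix τ > 0, and let f(z) := (1/π)·sqrt((θ²+μ²)/(((z−bτ)/(δτ))²+1))·exp(μδτ + θ(z−bτ))·K₁(δτ·sqrt((θ²+μ²)·(1+((z−bτ)/(δτ))²))). Then there exist constants c₊ > 0 and c₋ > 0 such that f(z)·z^{3/2}·exp(−θz + sqrt(θ²+μ²)·z) → c₊ as z → +∞, and f(z)·|z|^{3/2}·exp(−θz + sqrt(θ²+μ²)·|z|) → c₋ as z → −∞. -/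
open Filter Topology Real MeasureTheory

/-- The modified Bessel function of the third kind of order 1,
`K₁(y) = ∫_0^∞ e^{-y cosh u} cosh u du`. -/
noncomputable def besselK1 (y : ℝ) : ℝ :=
  ∫ u in Set.Ioi (0 : ℝ), Real.exp (-y * Real.cosh u) * Real.cosh u

lemma besselK1_eq {y : ℝ} (hy : 0 < y) :
    besselK1 y = ∫ t in Set.Ioi (0 : ℝ),
      Real.exp (-(y + t)) * (1 + t / y) / Real.sqrt (t * (t + 2 * y)) := by
  have himg : (fun u => y * Real.cosh u - y) '' Set.Ioi (0 : ℝ) = Set.Ioi 0 := by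
    ext t
    constructor
    · rintro ⟨u, hu, rfl⟩
      have h1 : 1 < Real.cosh u := Real.one_lt_cosh.2 (ne_of_gt hu)
      have : y * 1 < y * Real.cosh u := by nlinarith
      simpa using by nlinarith
    · intro ht
      have ht' : (0:ℝ) < t := ht
      refine ⟨Real.arsinh (Real.sqrt ((1 + t / y) ^ 2 - 1)), ?_, ?_⟩
      · rw [Set.mem_Ioi, Real.arsinh_pos_iff]
        have : (1:ℝ) < 1 + t / y := by
          have := div_pos ht' hy; linarith
        apply Real.sqrt_pos.2; nlinarith
      · show y * Real.cosh (Real.arsinh (Real.sqrt ((1 + t / y) ^ 2 - 1))) - y = t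
        rw [Real.cosh_arsinh, Real.sq_sqrt (by
          have : (1:ℝ) < 1 + t / y := by
            have := div_pos ht' hy; linarith
          nlinarith)]
        rw [show 1 + ((1 + t / y) ^ 2 - 1) = (1 + t / y) ^ 2 by ring,
          Real.sqrt_sq (by positivity)]
        field_simp
        ring
  have hderiv : ∀ u ∈ Set.Ioi (0:ℝ), HasDerivWithinAt (fun u => y * Real.cosh u - y)
      (y * Real.sinh u) (Set.Ioi 0) u := fun u _ =>
    (((Real.hasDerivAt_cosh u).const_mul y).sub_const y).hasDerivWithinAt
  have hinj : Set.InjOn (fun u => y * Real.cosh u - y) (Set.Ioi 0) := by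
    intro u hu v hv h
    simp only at h
    have h2 : y * Real.cosh u = y * Real.cosh v := by linarith
    exact Real.cosh_strictMonoOn.injOn (Set.mem_Ici.2 (le_of_lt hu)) (Set.mem_Ici.2 (le_of_lt hv))
      (mul_left_cancel₀ (ne_of_gt hy) h2)
  have := integral_image_eq_integral_abs_deriv_smul measurableSet_Ioi hderiv hinj
    (fun t => Real.exp (-(y + t)) * (1 + t / y) / Real.sqrt (t * (t + 2 * y)))
  rw [himg] at this
  rw [besselK1, this]
  apply setIntegral_congr_fun measurableSet_Ioi
  intro u hu
  have hu' : (0:ℝ) < u := hu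
  have hsinh : 0 < Real.sinh u := Real.sinh_pos_iff.2 hu'
  have hcosh : 1 < Real.cosh u := Real.one_lt_cosh.2 (ne_of_gt hu')
  have hprod : (y * Real.cosh u - y) * ((y * Real.cosh u - y) + 2 * y)
      = (y * Real.sinh u) ^ 2 := by
    linear_combination y ^ 2 * (Real.cosh_sq u)
  have h1 : Real.sqrt ((y * Real.cosh u - y) * ((y * Real.cosh u - y) + 2 * y))
      = y * Real.sinh u := by
    rw [hprod, Real.sqrt_sq (by positivity)]
  have h2 : 1 + (y * Real.cosh u - y) / y = Real.cosh u := by field_simp; ring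
  simp only [smul_eq_mul, h1, h2]
  rw [abs_of_pos (by positivity)]
  have h3 : -(y + (y * Real.cosh u - y)) = -y * Real.cosh u := by ring
  rw [h3]
  field_simp

lemma besselK1_scaled {y : ℝ} (hy : 0 < y) :
    Real.exp y * Real.sqrt y * besselK1 y
      = ∫ t in Set.Ioi (0 : ℝ),
          Real.exp (-t) * (1 + t / y) / Real.sqrt (t * (t / y + 2)) := by
  rw [besselK1_eq hy, ← MeasureTheory.integral_const_mul]
  apply setIntegral_congr_fun measurableSet_Ioi
  intro t ht
  have ht' : (0:ℝ) < t := ht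
  have h1 : t * (t + 2 * y) = y * (t * (t / y + 2)) := by field_simp
  dsimp only
  rw [h1, Real.sqrt_mul hy.le, Real.exp_neg, Real.exp_add]
  have hst : (0:ℝ) < Real.sqrt (t * (t / y + 2)) := by
    apply Real.sqrt_pos.2; positivity
  have hsy : (0:ℝ) < Real.sqrt y := Real.sqrt_pos.2 hy
  rw [Real.exp_neg]
  field_simp

noncomputable def besselC : ℝ := ∫ t in Set.Ioi (0 : ℝ), Real.exp (-t) / Real.sqrt (t * 2)

lemma besselBound_integrable :
    Integrable (fun t => Real.exp (-t) * (1 + t) / Real.sqrt (t * 2))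
      (volume.restrict (Set.Ioi (0:ℝ))) := by
  have h1 : IntegrableOn (fun x : ℝ => Real.exp (-x) * x ^ ((1:ℝ)/2 - 1)) (Set.Ioi 0) :=
    Real.GammaIntegral_convergent (by norm_num)
  have h2 : IntegrableOn (fun x : ℝ => Real.exp (-x) * x ^ ((3:ℝ)/2 - 1)) (Set.Ioi 0) :=
    Real.GammaIntegral_convergent (by norm_num)
  have h3 := ((h1.add h2).const_mul ((Real.sqrt 2)⁻¹))
  apply h3.congr
  filter_upwards [ae_restrict_mem measurableSet_Ioi] with t ht
  have ht' : (0:ℝ) < t := ht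
  have hs2 : (0:ℝ) < Real.sqrt 2 := by positivity
  have hst : (0:ℝ) < Real.sqrt t := Real.sqrt_pos.2 ht'
  have e1 : t ^ ((1:ℝ)/2 - 1) = (Real.sqrt t)⁻¹ := by
    rw [show ((1:ℝ)/2 - 1) = -(1/2) by norm_num, Real.rpow_neg ht'.le,
      ← Real.sqrt_eq_rpow]
  have e2 : t ^ ((3:ℝ)/2 - 1) = Real.sqrt t := by
    rw [show ((3:ℝ)/2 - 1) = 1/2 by norm_num, ← Real.sqrt_eq_rpow]
  have e3 : Real.sqrt (t * 2) = Real.sqrt t * Real.sqrt 2 := Real.sqrt_mul ht'.le 2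
  simp only [Pi.add_apply]
  rw [e1, e2, e3]
  have h5 : Real.sqrt t * Real.sqrt t = t := Real.mul_self_sqrt ht'.le
  field_simp
  linear_combination h5

lemma besselC_pos : 0 < besselC := by
  have h : besselC = (Real.sqrt 2)⁻¹ * Real.Gamma (1/2) := by
    rw [Real.Gamma_eq_integral (by norm_num : (0:ℝ) < 1/2), ← MeasureTheory.integral_const_mul,
      besselC]
    apply setIntegral_congr_fun measurableSet_Ioi
    intro t ht
    have ht' : (0:ℝ) < t := ht
    have e1 : t ^ ((1:ℝ)/2 - 1) = (Real.sqrt t)⁻¹ := by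
      rw [show ((1:ℝ)/2 - 1) = -(1/2) by norm_num, Real.rpow_neg ht'.le,
        ← Real.sqrt_eq_rpow]
    dsimp only
    rw [e1, Real.sqrt_mul ht'.le 2]
    have hs2 : (0:ℝ) < Real.sqrt 2 := by positivity
    have hst : (0:ℝ) < Real.sqrt t := Real.sqrt_pos.2 ht'
    field_simp
  rw [h]
  have := Real.Gamma_pos_of_pos (show (0:ℝ) < 1/2 by norm_num)
  positivity

lemma besselK1_tendsto :
    Tendsto (fun y => Real.exp y * Real.sqrt y * besselK1 y) atTop (𝓝 besselC) := by
  have key : Tendsto (fun y : ℝ => ∫ t in Set.Ioi (0 : ℝ),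
      Real.exp (-t) * (1 + t / y) / Real.sqrt (t * (t / y + 2))) atTop (𝓝 besselC) := by
    rw [besselC]
    apply tendsto_integral_filter_of_dominated_convergence
      (fun t => Real.exp (-t) * (1 + t) / Real.sqrt (t * 2))
    · filter_upwards with y
      apply Measurable.aestronglyMeasurable
      fun_prop
    · filter_upwards [eventually_ge_atTop (1:ℝ)] with y hy
      filter_upwards [ae_restrict_mem measurableSet_Ioi] with t ht
      have ht' : (0:ℝ) < t := ht
      have hy0 : (0:ℝ) < y := lt_of_lt_of_le one_pos hy
      have hnum : (0:ℝ) ≤ 1 + t / y := by positivity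
      have hden : Real.sqrt (t * 2) ≤ Real.sqrt (t * (t / y + 2)) := by
        apply Real.sqrt_le_sqrt
        have : (0:ℝ) ≤ t / y := by positivity
        nlinarith
      have hden0 : (0:ℝ) < Real.sqrt (t * 2) := Real.sqrt_pos.2 (by positivity)
      rw [Real.norm_eq_abs, abs_of_nonneg (by positivity)]
      apply div_le_div₀ (by positivity) ?_ hden0 hden
      have : t / y ≤ t := by
        rw [div_le_iff₀ hy0]; nlinarith
      nlinarith [Real.exp_pos (-t)]
    · exact besselBound_integrable
    · filter_upwards [ae_restrict_mem measurableSet_Ioi] with t ht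
      have ht' : (0:ℝ) < t := ht
      have hto : Tendsto (fun y : ℝ => t / y) atTop (𝓝 0) :=
        tendsto_const_nhds.div_atTop tendsto_id
      have hnum : Tendsto (fun y : ℝ => Real.exp (-t) * (1 + t / y)) atTop
          (𝓝 (Real.exp (-t) * (1 + 0))) :=
        tendsto_const_nhds.mul (tendsto_const_nhds.add hto)
      have hden : Tendsto (fun y : ℝ => Real.sqrt (t * (t / y + 2))) atTop
          (𝓝 (Real.sqrt (t * (0 + 2)))) :=
        (Real.continuous_sqrt.tendsto _).comp
          (tendsto_const_nhds.mul (hto.add tendsto_const_nhds))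
      have hne : Real.sqrt (t * (0 + 2)) ≠ 0 := by
        apply ne_of_gt; apply Real.sqrt_pos.2; nlinarith
      have := hnum.div hden hne
      simpa [Pi.div_def] using this
  apply key.congr'
  filter_upwards [eventually_gt_atTop (0:ℝ)] with y hy
  exact (besselK1_scaled hy).symm

lemma div_shift_tendsto (e : ℝ) : Tendsto (fun w : ℝ => w / (w - e)) atTop (𝓝 1) := by
  have h0 : Tendsto (fun w : ℝ => e * (w - e)⁻¹) atTop (𝓝 (e * 0)) :=
    (tendsto_inv_atTop_zero.comp (tendsto_atTop_add_const_right _ (-e) tendsto_id)).const_mul e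
  have h1 : Tendsto (fun w : ℝ => 1 + e * (w - e)⁻¹) atTop (𝓝 (1 + e * 0)) :=
    tendsto_const_nhds.add h0
  rw [show (1:ℝ) + e * 0 = 1 by ring] at h1
  apply h1.congr'
  filter_upwards [eventually_gt_atTop e] with w hw
  have : w - e ≠ 0 := by linarith
  field_simp
  ring

lemma core_tendsto (α c d : ℝ) (hα : 0 < α) (hd : 0 < d) :
    Tendsto (fun w : ℝ =>
        Real.sqrt (α ^ 2 / (((w - c) / d) ^ 2 + 1)) *
          besselK1 (d * Real.sqrt (α ^ 2 * (1 + ((w - c) / d) ^ 2))) *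
          w ^ ((3 : ℝ) / 2) * Real.exp (α * w))
      atTop (𝓝 (besselC * Real.sqrt α * d * Real.exp (α * c))) := by
  set R : ℝ → ℝ := fun w => Real.sqrt ((w - c) ^ 2 + d ^ 2) with hRdef
  have hR : ∀ w, 0 < R w := fun w => Real.sqrt_pos.2 (by positivity)
  have hkey1 : ∀ w, Real.sqrt (α ^ 2 / (((w - c) / d) ^ 2 + 1)) = α * d / R w := by
    intro w
    have h1 : α ^ 2 / (((w - c) / d) ^ 2 + 1) = (α * d) ^ 2 / ((w - c) ^ 2 + d ^ 2) := by
      field_simp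
    rw [h1, Real.sqrt_div (by positivity), Real.sqrt_sq (by positivity)]
  have hkey2 : ∀ w, d * Real.sqrt (α ^ 2 * (1 + ((w - c) / d) ^ 2)) = α * R w := by
    intro w
    rw [show d * Real.sqrt (α ^ 2 * (1 + ((w - c) / d) ^ 2))
        = Real.sqrt (d ^ 2) * Real.sqrt (α ^ 2 * (1 + ((w - c) / d) ^ 2)) by
      rw [Real.sqrt_sq hd.le],
      ← Real.sqrt_mul (by positivity),
      show d ^ 2 * (α ^ 2 * (1 + ((w - c) / d) ^ 2)) = α ^ 2 * ((w - c) ^ 2 + d ^ 2) by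
        field_simp; ring,
      Real.sqrt_mul (by positivity), Real.sqrt_sq hα.le]
  -- R tends to atTop
  have hRtop : Tendsto R atTop atTop := by
    apply tendsto_atTop_mono (fun w => ?_) (tendsto_atTop_add_const_right _ (-c) tendsto_id)
    have h1 : w + -c ≤ |w - c| := by rw [show w + -c = w - c by ring]; exact le_abs_self _
    calc w + -c ≤ |w - c| := h1
      _ = Real.sqrt ((w - c) ^ 2) := (Real.sqrt_sq_eq_abs _).symm
      _ ≤ R w := Real.sqrt_le_sqrt (by nlinarith)
  have hG : Tendsto (fun w => Real.exp (α * R w) * Real.sqrt (α * R w)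
      * besselK1 (α * R w)) atTop (𝓝 besselC) :=
    besselK1_tendsto.comp (hRtop.const_mul_atTop hα)
  -- w / R w → 1
  have hdiv : Tendsto (fun w => w / R w) atTop (𝓝 1) := by
    apply tendsto_of_tendsto_of_tendsto_of_le_of_le' (div_shift_tendsto (c - d))
      (div_shift_tendsto c)
    · filter_upwards [eventually_gt_atTop (max c 0)] with w hw
      have hwc : 0 < w - c := by have := lt_of_le_of_lt (le_max_left c 0) hw; linarith
      have hw0 : 0 < w := lt_of_le_of_lt (le_max_right c 0) hw
      have hle : R w ≤ (w - c) + d := by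
        rw [hRdef]
        calc Real.sqrt ((w - c) ^ 2 + d ^ 2) ≤ Real.sqrt (((w - c) + d) ^ 2) :=
              Real.sqrt_le_sqrt (by nlinarith)
          _ = (w - c) + d := Real.sqrt_sq (by positivity)
      rw [show w - (c - d) = (w - c) + d by ring]
      exact div_le_div_of_nonneg_left hw0.le (hR w) hle
    · filter_upwards [eventually_gt_atTop (max c 0)] with w hw
      have hwc : 0 < w - c := by have := lt_of_le_of_lt (le_max_left c 0) hw; linarith
      have hw0 : 0 < w := lt_of_le_of_lt (le_max_right c 0) hw
      have hge : w - c ≤ R w := by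
        calc w - c ≤ |w - c| := le_abs_self _
          _ = Real.sqrt ((w - c) ^ 2) := (Real.sqrt_sq_eq_abs _).symm
          _ ≤ R w := Real.sqrt_le_sqrt (by nlinarith)
      exact div_le_div_of_nonneg_left hw0.le hwc hge
  have hpow : Tendsto (fun w => (w / R w) ^ ((3:ℝ)/2)) atTop (𝓝 1) := by
    have := hdiv.rpow_const (p := (3:ℝ)/2) (Or.inl one_ne_zero)
    simpa using this
  -- w - R w → c
  have hsub : Tendsto (fun w => w - R w) atTop (𝓝 c) := by
    have h0 : Tendsto (fun w => R w - (w - c)) atTop (𝓝 0) := by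
      have hup : Tendsto (fun w : ℝ => d ^ 2 / (2 * (w - c))) atTop (𝓝 0) :=
        tendsto_const_nhds.div_atTop
          ((tendsto_atTop_add_const_right _ (-c) tendsto_id).const_mul_atTop two_pos)
      apply tendsto_of_tendsto_of_tendsto_of_le_of_le' tendsto_const_nhds hup
      · filter_upwards [eventually_gt_atTop c] with w hw
        have hge : w - c ≤ R w := by
          calc w - c ≤ |w - c| := le_abs_self _
            _ = Real.sqrt ((w - c) ^ 2) := (Real.sqrt_sq_eq_abs _).symm
            _ ≤ R w := Real.sqrt_le_sqrt (by nlinarith)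
        linarith
      · filter_upwards [eventually_gt_atTop c] with w hw
        have hwc : 0 < w - c := by linarith
        have hle : R w ≤ (w - c) + d ^ 2 / (2 * (w - c)) := by
          rw [hRdef]
          calc Real.sqrt ((w - c) ^ 2 + d ^ 2)
              ≤ Real.sqrt (((w - c) + d ^ 2 / (2 * (w - c))) ^ 2) := by
                apply Real.sqrt_le_sqrt
                have h4 : (0:ℝ) ≤ (d ^ 2 / (2 * (w - c))) ^ 2 := sq_nonneg _
                have h5 : (w - c) * (d ^ 2 / (2 * (w - c))) = d ^ 2 / 2 := by
                  field_simp
                nlinarith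
            _ = (w - c) + d ^ 2 / (2 * (w - c)) := Real.sqrt_sq (by positivity)
        linarith
    have h1 : Tendsto (fun w => c - (R w - (w - c))) atTop (𝓝 (c - 0)) :=
      tendsto_const_nhds.sub h0
    rw [sub_zero] at h1
    exact h1.congr (fun w => by ring)
  have hexp : Tendsto (fun w => Real.exp (α * (w - R w))) atTop (𝓝 (Real.exp (α * c))) :=
    (Real.continuous_exp.tendsto _).comp (hsub.const_mul α)
  -- combine
  have hF : Tendsto (fun w =>
      (Real.exp (α * R w) * Real.sqrt (α * R w) * besselK1 (α * R w)) *
        (Real.sqrt α * d * (w / R w) ^ ((3:ℝ)/2)) * Real.exp (α * (w - R w)))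
      atTop (𝓝 (besselC * (Real.sqrt α * d * 1) * Real.exp (α * c))) :=
    (hG.mul ((tendsto_const_nhds.mul hpow))).mul hexp
  rw [show besselC * (Real.sqrt α * d * 1) * Real.exp (α * c)
      = besselC * Real.sqrt α * d * Real.exp (α * c) by ring] at hF
  apply hF.congr'
  filter_upwards [eventually_gt_atTop (max c 0)] with w hw
  have hw0 : 0 < w := lt_of_le_of_lt (le_max_right c 0) hw
  rw [hkey1 w, hkey2 w]
  have hRw := hR w
  have hrp : w ^ ((3:ℝ)/2) / (R w) ^ ((3:ℝ)/2) = (w / R w) ^ ((3:ℝ)/2) :=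
    (Real.div_rpow hw0.le hRw.le _).symm
  have hR32 : (R w) ^ ((3:ℝ)/2) = R w * Real.sqrt (R w) := by
    rw [show (3:ℝ)/2 = 1 + 1/2 by norm_num, Real.rpow_add hRw, Real.rpow_one,
      ← Real.sqrt_eq_rpow]
  set A := Real.sqrt α with hA
  have ha2 : A * A = α := Real.mul_self_sqrt hα.le
  rw [Real.sqrt_mul hα.le, ← hA]
  rw [show α * (w - R w) = α * w - α * R w by ring, Real.exp_sub]
  rw [← hrp, hR32]
  have hSR : 0 < Real.sqrt (R w) := Real.sqrt_pos.2 hRw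
  have hE : 0 < Real.exp (α * R w) := Real.exp_pos _
  rw [← ha2]
  field_simp

/-- The NIG density `f` decays at the rate `|z|^{-3/2} exp(θz - √(θ²+μ²)|z|)` as
`z → ±∞`: there exist positive constants `c₊, c₋` with
`f(z)·z^{3/2}·exp(-θz + √(θ²+μ²) z) → c₊` as `z → +∞` and
`f(z)·|z|^{3/2}·exp(-θz + √(θ²+μ²)|z|) → c₋` as `z → -∞`. -/
theorem nig_density_tail_rate
    (μ θ b δ : ℝ) (hδ : 0 < δ) (hθμ : 0 < θ ^ 2 + μ ^ 2)
    (τ : ℝ) (hτ : 0 < τ)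
    (f : ℝ → ℝ)
    (hf : ∀ z, f z
      = (1 / π) *
          Real.sqrt ((θ ^ 2 + μ ^ 2) / (((z - b * τ) / (δ * τ)) ^ 2 + 1)) *
          Real.exp (μ * δ * τ + θ * (z - b * τ)) *
          besselK1 (δ * τ *
            Real.sqrt ((θ ^ 2 + μ ^ 2) * (1 + ((z - b * τ) / (δ * τ)) ^ 2)))) :
    (∃ cp > (0 : ℝ),
      Tendsto
        (fun z : ℝ => f z * z ^ ((3 : ℝ) / 2) *
          Real.exp (-θ * z + Real.sqrt (θ ^ 2 + μ ^ 2) * z))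
        atTop (𝓝 cp))
    ∧ (∃ cm > (0 : ℝ),
      Tendsto
        (fun z : ℝ => f z * |z| ^ ((3 : ℝ) / 2) *
          Real.exp (-θ * z + Real.sqrt (θ ^ 2 + μ ^ 2) * |z|))
        atBot (𝓝 cm)) := by
  set α := Real.sqrt (θ ^ 2 + μ ^ 2) with hαdef
  have hα : 0 < α := Real.sqrt_pos.2 hθμ
  have hα2 : α ^ 2 = θ ^ 2 + μ ^ 2 := Real.sq_sqrt hθμ.le
  have hd : 0 < δ * τ := mul_pos hδ hτ
  set K : ℝ := (1 / π) * Real.exp (μ * δ * τ - θ * (b * τ)) with hKdef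
  have hK : 0 < K := by
    have := Real.pi_pos
    positivity
  constructor
  · refine ⟨K * (besselC * Real.sqrt α * (δ * τ) * Real.exp (α * (b * τ))), ?_, ?_⟩
    · have := besselC_pos
      have : 0 < Real.sqrt α := Real.sqrt_pos.2 hα
      positivity
    · have h1 := (core_tendsto α (b * τ) (δ * τ) hα hd).const_mul K
      apply h1.congr
      intro z
      rw [hf z, ← hα2]
      have hexp : Real.exp (μ * δ * τ + θ * (z - b * τ)) * Real.exp (-θ * z + α * z)
          = Real.exp (μ * δ * τ - θ * (b * τ)) * Real.exp (α * z) := by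
        rw [← Real.exp_add, ← Real.exp_add]; congr 1; ring
      rw [hKdef]
      linear_combination -((1 / π) * Real.sqrt (α ^ 2 / (((z - b * τ) / (δ * τ)) ^ 2 + 1)) *
        besselK1 (δ * τ * Real.sqrt (α ^ 2 * (1 + ((z - b * τ) / (δ * τ)) ^ 2))) *
        z ^ ((3 : ℝ) / 2)) * hexp
  · refine ⟨K * (besselC * Real.sqrt α * (δ * τ) * Real.exp (α * (-(b * τ)))), ?_, ?_⟩
    · have := besselC_pos
      have : 0 < Real.sqrt α := Real.sqrt_pos.2 hα
      positivity
    · have h2 := (core_tendsto α (-(b * τ)) (δ * τ) hα hd).const_mul K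
      have h3 := h2.comp tendsto_neg_atBot_atTop
      apply h3.congr'
      filter_upwards [eventually_lt_atBot (0 : ℝ)] with z hz
      have habs : |z| = -z := abs_of_neg hz
      simp only [Function.comp]
      rw [hf z, ← hα2, habs]
      have hsq : ((-z - -(b * τ)) / (δ * τ)) ^ 2 = ((z - b * τ) / (δ * τ)) ^ 2 := by
        ring
      rw [hsq]
      have hexp : Real.exp (μ * δ * τ + θ * (z - b * τ)) * Real.exp (-θ * z + α * -z)
          = Real.exp (μ * δ * τ - θ * (b * τ)) * Real.exp (α * -z) := by
        rw [← Real.exp_add, ← Real.exp_add]; congr 1; ring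
      rw [hKdef]
      linear_combination -((1 / π) * Real.sqrt (α ^ 2 / (((z - b * τ) / (δ * τ)) ^ 2 + 1)) *
        besselK1 (δ * τ * Real.sqrt (α ^ 2 * (1 + ((z - b * τ) / (δ * τ)) ^ 2))) *
        (-z) ^ ((3 : ℝ) / 2)) * hexp
end

section
/- Let W be a standard one-dimensional Brownian motion on a probability space (W₀ = 0, almost surely continuous sample paths, independent increments, and W_t − W_s Gaussian with mean 0 and variance t − s for 0 ≤ s ≤ t). Fix σ > 0, μ ∈ ℝ, τ > 0, K > 0, and set Z_s := σW_s + μs. Let h be a Borel-measurable real-valued functional on continuous paths w : [0,τ] → ℝ (with the uniform topology) satisfying inf_{s∈[0,τ]} w(s) ≤ h(w) ≤ sup_{s∈[0,τ]} w(s) for all w, and h(a·w) = a·h(w) for all a ∈ ℝ and all w. Set C := E[h((e^{Z_s})_{0≤s≤τ})] (which is finite and positive), and for x > 0 define ε(x) := E[(h((x·e^{Z_s})_{0≤s≤τ}) − K)⁺] − C·(x − K/C)⁺. Then ∫_{−∞}^{∞} |ε(e^z)|·e^{μz/σ²} dz < ∞. -/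
open MeasureTheory Filter Topology ProbabilityTheory

section AuxiliaryLemmas

open MeasureTheory Filter Topology ProbabilityTheory Real Set
open scoped NNReal ENNReal

lemma gauss_half (v : ℝ≥0) : 2⁻¹ ≤ gaussianReal 0 v (Set.Ici 0) := by
  by_cases hv : v = 0
  · subst hv
    rw [gaussianReal_zero_var, Measure.dirac_apply' _ measurableSet_Ici]
    simp [Set.indicator_of_mem (Set.self_mem_Ici)]
  · have hmap : (gaussianReal 0 v).map (fun x : ℝ => -x) = gaussianReal 0 v := by
      have h1 : (fun x : ℝ => -x) = (fun x : ℝ => (-1 : ℝ) * x) := by funext x; ring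
      rw [h1, gaussianReal_map_const_mul]
      norm_num
    have h2 : gaussianReal 0 v (Set.Iic 0) = gaussianReal 0 v (Set.Ici 0) := by
      conv_lhs => rw [← hmap]
      rw [Measure.map_apply measurable_neg measurableSet_Iic]
      congr 1
      ext x
      simp
    have h3 : (1 : ℝ≥0∞) ≤ 2 * gaussianReal 0 v (Set.Ici 0) := by
      have huniv : (Set.univ : Set ℝ) = Set.Ici 0 ∪ Set.Iic 0 := by
        ext x; simp [le_total]
      calc (1:ℝ≥0∞) = gaussianReal 0 v Set.univ := by simp
        _ ≤ gaussianReal 0 v (Set.Ici 0) + gaussianReal 0 v (Set.Iic 0) := by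
            rw [huniv]; exact measure_union_le _ _
        _ = 2 * gaussianReal 0 v (Set.Ici 0) := by rw [h2, two_mul]
    rw [← one_div, ENNReal.div_le_iff_le_mul (Or.inl two_ne_zero) (Or.inl ENNReal.ofNat_ne_top)]
    rw [mul_comm] at h3
    exact h3

-- value of ∫ exp(-b x) over Ioi a
lemma integral_exp_neg_mul_Ioi {b a : ℝ} (hb : 0 < b) :
    ∫ x in Set.Ioi a, Real.exp (-b * x) = Real.exp (-b * a) / b := by
  have hd : ∀ x ∈ Set.Ici a, HasDerivAt (fun y => -(1/b) * Real.exp (-b * y))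
      (Real.exp (-b * x)) x := by
    intro x _
    have h1 : HasDerivAt (fun y : ℝ => -b * y) (-b) x := by
      simpa using (hasDerivAt_id x).const_mul (-b)
    have h2 := (h1.exp).const_mul (-(1/b))
    refine h2.congr_deriv ?_
    field_simp
  have hint : IntegrableOn (fun x => Real.exp (-b * x)) (Set.Ioi a) :=
    exp_neg_integrableOn_Ioi a hb
  have htend : Tendsto (fun y => -(1/b) * Real.exp (-b * y)) atTop (nhds 0) := by
    have : Tendsto (fun y : ℝ => -b * y) atTop atBot := by
      exact tendsto_id.const_mul_atTop_of_neg (neg_neg_iff_pos.mpr hb)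
    have := (Real.tendsto_exp_atBot.comp this).const_mul (-(1/b))
    simpa using this
  have := integral_Ioi_of_hasDerivAt_of_tendsto' hd hint htend
  rw [this]
  field_simp
  ring

lemma gauss_tail (v : ℝ≥0) {T a : ℝ} (hT : 0 < T) (hv : (v:ℝ) ≤ T) (ha : 0 < a) :
    gaussianReal 0 v (Set.Ici a) ≤ 2 * ENNReal.ofReal (Real.exp (-a^2/(2*T))) := by
  by_cases hsmall : a^2 ≤ T
  · -- trivial bound by 1
    have h1 : gaussianReal 0 v (Set.Ici a) ≤ 1 := prob_le_one
    refine h1.trans ?_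
    have : (1:ℝ) ≤ 2 * Real.exp (-a^2/(2*T)) := by
      have h2 : (-(1:ℝ)/2) ≤ -a^2/(2*T) := by
        rw [div_le_div_iff₀ (by norm_num) (by positivity)]
        nlinarith
      have h3 := Real.add_one_le_exp (-(1:ℝ)/2)
      have h4 := Real.exp_le_exp.mpr h2
      nlinarith
    calc (1:ℝ≥0∞) = ENNReal.ofReal 1 := by simp
      _ ≤ ENNReal.ofReal (2 * Real.exp (-a^2/(2*T))) := ENNReal.ofReal_le_ofReal this
      _ = 2 * ENNReal.ofReal (Real.exp (-a^2/(2*T))) := by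
          rw [ENNReal.ofReal_mul (by norm_num)]; simp
  · push_neg at hsmall
    by_cases hv0 : v = 0
    · subst hv0
      rw [gaussianReal_zero_var, Measure.dirac_apply' _ measurableSet_Ici]
      simp [Set.indicator_of_notMem (by simpa using ha : (0:ℝ) ∉ Set.Ici a)]
    · have hvpos : (0:ℝ) < v := by positivity
      set b : ℝ := a / v with hbdef
      have hb : 0 < b := div_pos ha hvpos
      have hpt : ∀ x : ℝ, gaussianPDF 0 v x
          ≤ ENNReal.ofReal ((√(2*π*v))⁻¹ * (Real.exp (a^2/(2*v)) * Real.exp (-b*x))) := by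
        intro x
        rw [gaussianPDF]
        apply ENNReal.ofReal_le_ofReal
        unfold gaussianPDFReal
        apply mul_le_mul_of_nonneg_left _ (inv_nonneg.mpr (Real.sqrt_nonneg _))
        rw [← Real.exp_add]
        apply Real.exp_le_exp.mpr
        have h2v : (0:ℝ) < 2*v := by positivity
        have hrw : a^2/(2*(v:ℝ)) + (-b*x) = (a^2 - 2*a*x)/(2*v) := by
          rw [hbdef]; field_simp; ring
        rw [hrw]
        rw [div_le_div_iff_of_pos_right h2v]
        nlinarith [sq_nonneg (x - a)]
      have hint2 : IntegrableOn
          (fun x => (√(2*π*v))⁻¹ * (Real.exp (a^2/(2*(v:ℝ))) * Real.exp (-b*x))) (Set.Ioi a) :=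
        ((exp_neg_integrableOn_Ioi a hb).const_mul _).const_mul _
      have key : gaussianReal 0 v (Set.Ici a)
          ≤ ENNReal.ofReal ((√(2 * π * v))⁻¹ * (Real.exp (a^2/(2*v)) * (Real.exp (-b*a) / b))) := by
        rw [gaussianReal_apply 0 hv0 (Set.Ici a)]
        have hres : (volume : Measure ℝ).restrict (Set.Ici a) = volume.restrict (Set.Ioi a) :=
          (Measure.restrict_congr_set Ioi_ae_eq_Ici).symm
        rw [show ∫⁻ x in Set.Ici a, gaussianPDF 0 v x = ∫⁻ x in Set.Ioi a, gaussianPDF 0 v x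
          from by rw [hres]]
        calc ∫⁻ x in Set.Ioi a, gaussianPDF 0 v x
            ≤ ∫⁻ x in Set.Ioi a,
              ENNReal.ofReal ((√(2*π*v))⁻¹ * (Real.exp (a^2/(2*v)) * Real.exp (-b*x))) :=
              lintegral_mono (fun x => hpt x)
          _ = ENNReal.ofReal (∫ x in Set.Ioi a,
              (√(2*π*v))⁻¹ * (Real.exp (a^2/(2*v)) * Real.exp (-b*x))) := by
              rw [← ofReal_integral_eq_lintegral_ofReal hint2
                (Filter.Eventually.of_forall (fun x => by positivity))]
          _ = ENNReal.ofReal ((√(2*π*v))⁻¹ * (Real.exp (a^2/(2*v)) * (Real.exp (-b*a)/b))) := by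
              rw [MeasureTheory.integral_const_mul, MeasureTheory.integral_const_mul, integral_exp_neg_mul_Ioi hb]
      refine key.trans ?_
      have hπ : (1:ℝ) ≤ 2*π := by nlinarith [Real.pi_gt_three]
      have hspos : 0 < √(2*π*(v:ℝ)) := Real.sqrt_pos.mpr (by positivity)
      have hsqv : (√(v:ℝ))^2 = v := Real.sq_sqrt (le_of_lt hvpos)
      have hsvnn : 0 ≤ √(v:ℝ) := Real.sqrt_nonneg _
      have hasv : √(v:ℝ) ≤ a := by nlinarith
      have hsv_le_s : √(v:ℝ) ≤ √(2*π*(v:ℝ)) := by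
        apply Real.sqrt_le_sqrt; nlinarith [hvpos]
      have hva : (v:ℝ)/a ≤ √(2*π*(v:ℝ)) := by
        rw [div_le_iff₀ ha]
        nlinarith
      have hpre : (√(2*π*(v:ℝ)))⁻¹ * ((v:ℝ)/a) ≤ 1 := by
        calc (√(2*π*(v:ℝ)))⁻¹ * ((v:ℝ)/a) ≤ (√(2*π*(v:ℝ)))⁻¹ * √(2*π*(v:ℝ)) :=
              mul_le_mul_of_nonneg_left hva (inv_nonneg.mpr hspos.le)
          _ = 1 := inv_mul_cancel₀ hspos.ne'
      have h6 : Real.exp (a ^ 2 / (2 * (v:ℝ))) * Real.exp (-b * a) = Real.exp (-a^2/(2*(v:ℝ))) := by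
        rw [← Real.exp_add]; congr 1; rw [hbdef]; field_simp; ring
      have h7 : Real.exp (a^2/(2*(v:ℝ))) * (Real.exp (-b*a)/b)
          = Real.exp (-a^2/(2*(v:ℝ))) * ((v:ℝ)/a) := by
        rw [mul_div_assoc', h6, hbdef, div_div_eq_mul_div, mul_div_assoc]
      have hexpmono : Real.exp (-a^2/(2*(v:ℝ))) ≤ Real.exp (-a^2/(2*T)) := by
        apply Real.exp_le_exp.mpr
        rw [neg_div, neg_div, neg_le_neg_iff]
        apply div_le_div_of_nonneg_left (sq_nonneg a) (by positivity) (by nlinarith)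
      have hreal : (√(2*π*(v:ℝ)))⁻¹ * (Real.exp (a^2/(2*(v:ℝ))) * (Real.exp (-b*a)/b))
          ≤ Real.exp (-a^2/(2*T)) := by
        rw [h7]
        calc (√(2*π*(v:ℝ)))⁻¹ * (Real.exp (-a^2/(2*(v:ℝ))) * ((v:ℝ)/a))
            = ((√(2*π*(v:ℝ)))⁻¹ * ((v:ℝ)/a)) * Real.exp (-a^2/(2*(v:ℝ))) := by ring
          _ ≤ 1 * Real.exp (-a^2/(2*T)) := by
              apply mul_le_mul hpre hexpmono (Real.exp_nonneg _) (by norm_num)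
          _ = Real.exp (-a^2/(2*T)) := one_mul _
      calc ENNReal.ofReal ((√(2*π*(v:ℝ)))⁻¹ * (Real.exp (a^2/(2*(v:ℝ))) * (Real.exp (-b*a)/b)))
          ≤ ENNReal.ofReal (Real.exp (-a^2/(2*T))) := ENNReal.ofReal_le_ofReal hreal
        _ ≤ 2 * ENNReal.ofReal (Real.exp (-a^2/(2*T))) :=
            le_mul_of_one_le_left zero_le one_le_two

lemma levy_tail {Ω : Type*} [MeasurableSpace Ω] (P : Measure Ω) [IsProbabilityMeasure P]
    (W : ℝ → Ω → ℝ)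
    (hWmeas : ∀ t, Measurable (W t))
    (hW0 : ∀ᵐ ω ∂P, W 0 ω = 0)
    (hWindep : ∀ (n : ℕ) (t : Fin (n + 1) → ℝ), Monotone t → 0 ≤ t 0 →
      iIndepFun
        (fun i : Fin n => fun ω => W (t i.succ) ω - W (t i.castSucc) ω) P)
    (hWgauss : ∀ s t : ℝ, 0 ≤ s → s ≤ t →
      P.map (fun ω => W t ω - W s ω) = gaussianReal 0 (t - s).toNNReal)
    {τ : ℝ} (hτ : 0 < τ) (n : ℕ) (t : Fin (n+1) → ℝ) (hmono : Monotone t)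
    (ht0 : t 0 = 0) (htn : t (Fin.last n) ≤ τ) {a : ℝ} (ha : 0 < a) :
    P {ω | ∃ i, a ≤ W (t i) ω} ≤ 4 * ENNReal.ofReal (Real.exp (-a^2/(2*τ))) := by
  classical
  set X : Fin n → Ω → ℝ := fun i ω => W (t i.succ) ω - W (t i.castSucc) ω with hXdef
  have hXmeas : ∀ i, Measurable (X i) := fun i => (hWmeas _).sub (hWmeas _)
  have hXindep : iIndepFun X P :=
    hWindep n t hmono (le_of_eq ht0.symm)
  set S : ℕ → Ω → ℝ :=
    fun k ω => ∑ i ∈ Finset.univ.filter (fun i : Fin n => (i:ℕ) < k), X i ω with hSdef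
  -- telescoping
  have htel : ∀ (k : ℕ) (hk : k ≤ n) (ω : Ω),
      S k ω = W (t ⟨k, Nat.lt_succ_of_le hk⟩) ω - W (t 0) ω := by
    intro k
    induction k with
    | zero =>
      intro hk ω
      have h0 : Finset.univ.filter (fun i : Fin n => (i:ℕ) < 0) = ∅ := by
        ext i; simp
      have : (⟨0, Nat.lt_succ_of_le hk⟩ : Fin (n+1)) = 0 := rfl
      simp [hSdef, h0, this]
    | succ k ih =>
      intro hk ω
      have hkn : k < n := hk
      have hins : Finset.univ.filter (fun i : Fin n => (i:ℕ) < k + 1)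
          = insert (⟨k, hkn⟩ : Fin n) (Finset.univ.filter (fun i : Fin n => (i:ℕ) < k)) := by
        ext i
        simp only [Finset.mem_filter, Finset.mem_univ, true_and, Finset.mem_insert]
        rw [Nat.lt_succ_iff, le_iff_lt_or_eq, Fin.ext_iff]
        tauto
      have hnotmem : (⟨k, hkn⟩ : Fin n) ∉ Finset.univ.filter (fun i : Fin n => (i:ℕ) < k) := by
        simp
      have hstep : S (k+1) ω = X ⟨k, hkn⟩ ω + S k ω := by
        rw [hSdef]
        simp only
        rw [hins, Finset.sum_insert hnotmem]
      rw [hstep, ih (le_of_lt hkn) ω]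
      have hsucc : (⟨k, hkn⟩ : Fin n).succ = (⟨k+1, Nat.lt_succ_of_le hk⟩ : Fin (n+1)) := rfl
      have hcast : (⟨k, hkn⟩ : Fin n).castSucc
          = (⟨k, Nat.lt_succ_of_le (le_of_lt hkn)⟩ : Fin (n+1)) := rfl
      rw [hXdef]
      simp only [hsucc, hcast]
      ring
  -- events
  set E : ℕ → Set Ω := fun k => {ω | (∀ j < k, S j ω < a) ∧ a ≤ S k ω} with hEdef
  set B : ℕ → Set Ω := fun k => {ω | 0 ≤ S n ω - S k ω} with hBdef
  set m : Fin n → MeasurableSpace Ω :=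
    fun i => MeasurableSpace.comap (X i) inferInstance with hmdef
  have hle : ∀ i, m i ≤ (inferInstance : MeasurableSpace Ω) :=
    fun i => measurable_iff_comap_le.mp (hXmeas i)
  set σ1 : ℕ → MeasurableSpace Ω := fun k => ⨆ i ∈ {i : Fin n | (i:ℕ) < k}, m i with hσ1
  set σ2 : ℕ → MeasurableSpace Ω := fun k => ⨆ i ∈ {i : Fin n | ¬ ((i:ℕ) < k)}, m i with hσ2
  have hind : ∀ k, Indep (σ1 k) (σ2 k) P := by
    intro k
    refine indep_iSup_of_disjoint hle hXindep.iIndep ?_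
    rw [Set.disjoint_left]
    intro i hi hi'
    exact hi' hi
  have hσ1le : ∀ k, σ1 k ≤ (inferInstance : MeasurableSpace Ω) :=
    fun k => iSup_le fun i => iSup_le fun _ => hle i
  have hσ2le : ∀ k, σ2 k ≤ (inferInstance : MeasurableSpace Ω) :=
    fun k => iSup_le fun i => iSup_le fun _ => hle i
  have hS1 : ∀ k j, j ≤ k → Measurable[σ1 k] (S j) := by
    intro k j hj
    apply Finset.measurable_sum
    intro i hi
    have hik : (i:ℕ) < k := lt_of_lt_of_le (Finset.mem_filter.mp hi).2 hj
    have : m i ≤ σ1 k := le_biSup m hik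
    exact Measurable.mono (Measurable.of_comap_le le_rfl) this le_rfl
  have hdiffsum : ∀ k (ω : Ω), S n ω - S k ω
      = ∑ i ∈ Finset.univ.filter (fun i : Fin n => ¬ ((i:ℕ) < k)), X i ω := by
    intro k ω
    have hsplit := Finset.sum_filter_add_sum_filter_not Finset.univ
      (fun i : Fin n => (i:ℕ) < k) (fun i => X i ω)
    have huniv : Finset.univ.filter (fun i : Fin n => (i:ℕ) < n) = Finset.univ := by
      apply Finset.filter_true_of_mem
      intro i _
      exact i.isLt
    have hSn : S n ω = ∑ i ∈ Finset.univ, X i ω := by rw [hSdef]; simp only [huniv]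
    rw [hSn, ← hsplit, hSdef]
    ring
  have hS2 : ∀ k, Measurable[σ2 k] (fun ω => S n ω - S k ω) := by
    intro k
    have : (fun ω => S n ω - S k ω)
        = fun ω => ∑ i ∈ Finset.univ.filter (fun i : Fin n => ¬ ((i:ℕ) < k)), X i ω := by
      funext ω; exact hdiffsum k ω
    rw [this]
    apply Finset.measurable_sum
    intro i hi
    have hik : ¬ ((i:ℕ) < k) := (Finset.mem_filter.mp hi).2
    have : m i ≤ σ2 k := le_biSup m hik
    exact Measurable.mono (Measurable.of_comap_le le_rfl) this le_rfl
  have hE : ∀ k, MeasurableSet[σ1 k] (E k) := by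
    intro k
    have hEeq : E k = (⋂ j ∈ Set.Iio k, {ω | S j ω < a}) ∩ {ω | a ≤ S k ω} := by
      ext ω
      simp only [hEdef, Set.mem_setOf_eq, Set.mem_inter_iff, Set.mem_iInter, Set.mem_Iio]
    rw [hEeq]
    refine MeasurableSet.inter ?_ ?_
    · refine MeasurableSet.biInter (Set.to_countable _) ?_
      intro j hj
      exact measurableSet_lt (hS1 k j (le_of_lt hj)) measurable_const
    · exact measurableSet_le measurable_const (hS1 k k le_rfl)
  have hB : ∀ k, MeasurableSet[σ2 k] (B k) := by
    intro k
    exact measurableSet_le measurable_const (hS2 k)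
  have hEamb : ∀ k, MeasurableSet (E k) := fun k => hσ1le k _ (hE k)
  have hBamb : ∀ k, MeasurableSet (B k) := fun k => hσ2le k _ (hB k)
  have hmul : ∀ k, P (E k ∩ B k) = P (E k) * P (B k) := by
    intro k
    exact (Indep_iff _ _ _).mp (hind k) (E k) (B k) (hE k) (hB k)
  have hBhalf : ∀ k, k ≤ n → 2⁻¹ ≤ P (B k) := by
    intro k hk
    have hfun : ∀ ω, S n ω - S k ω
        = W (t (Fin.last n)) ω - W (t ⟨k, Nat.lt_succ_of_le hk⟩) ω := by
      intro ω
      rw [htel n le_rfl ω, htel k hk ω]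
      have : (⟨n, Nat.lt_succ_of_le le_rfl⟩ : Fin (n+1)) = Fin.last n := rfl
      rw [this]; ring
    have hEq : B k = (fun ω => W (t (Fin.last n)) ω - W (t ⟨k, Nat.lt_succ_of_le hk⟩) ω)
        ⁻¹' (Set.Ici 0) := by
      ext ω
      simp only [hBdef, Set.mem_setOf_eq, Set.mem_preimage, Set.mem_Ici, hfun ω]
    have h0k : (0:ℝ) ≤ t ⟨k, Nat.lt_succ_of_le hk⟩ := by
      rw [← ht0]; exact hmono (Fin.zero_le _)
    have hkl : t ⟨k, Nat.lt_succ_of_le hk⟩ ≤ t (Fin.last n) := hmono (Fin.le_last _)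
    rw [hEq, ← Measure.map_apply (f := fun ω => W (t (Fin.last n)) ω - W (t ⟨k, Nat.lt_succ_of_le hk⟩) ω) ((hWmeas _).sub (hWmeas _)) measurableSet_Ici,
      hWgauss _ _ h0k hkl]
    exact gauss_half _
  have hEk2 : ∀ k, k ≤ n → P (E k) ≤ 2 * P (E k ∩ B k) := by
    intro k hk
    rw [hmul k]
    calc P (E k) = 2 * (2⁻¹ * P (E k)) := by
          rw [← mul_assoc, ENNReal.mul_inv_cancel two_ne_zero ENNReal.ofNat_ne_top, one_mul]
      _ ≤ 2 * (P (B k) * P (E k)) :=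
          mul_le_mul_right (mul_le_mul_left (hBhalf k hk) _) 2
      _ = 2 * (P (E k) * P (B k)) := by rw [mul_comm (P (B k))]
  have hdisj : Set.PairwiseDisjoint ↑(Finset.range (n+1)) E := by
    intro x _ y _ hxy
    have key : ∀ u v : ℕ, u < v → Disjoint (E u) (E v) := by
      intro u v huv
      rw [Set.disjoint_left]
      intro ω hωu hωv
      exact absurd hωu.2 (not_le.mpr (hωv.1 u huv))
    rcases lt_or_gt_of_ne hxy with hlt | hgt
    · exact key x y hlt
    · exact (key y x hgt).symm
  have hdisj2 : Set.PairwiseDisjoint ↑(Finset.range (n+1)) (fun k => E k ∩ B k) := by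
    intro x hx y hy hxy
    exact Disjoint.mono Set.inter_subset_left Set.inter_subset_left (hdisj hx hy hxy)
  have hcover : {ω | ∃ i : Fin (n+1), a ≤ S (i:ℕ) ω} = ⋃ k ∈ Finset.range (n+1), E k := by
    ext ω
    simp only [Set.mem_setOf_eq, Set.mem_iUnion, Finset.mem_range]
    constructor
    · rintro ⟨i, hi⟩
      have hQ : ∃ k, a ≤ S k ω := ⟨i, hi⟩
      refine ⟨Nat.find hQ, ?_, ?_, Nat.find_spec hQ⟩
      · exact Nat.lt_succ_of_le (le_trans (Nat.find_min' hQ hi) i.is_le)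
      · intro j hj
        exact not_le.mp (Nat.find_min hQ hj)
    · rintro ⟨k, hk, _, hka⟩
      exact ⟨⟨k, hk⟩, hka⟩
  have hcover2 : (⋃ k ∈ Finset.range (n+1), E k ∩ B k) ⊆ {ω | a ≤ S n ω} := by
    intro ω hω
    simp only [Set.mem_iUnion, Finset.mem_range] at hω
    obtain ⟨k, _, hωE, hωB⟩ := hω
    have h1 : a ≤ S k ω := hωE.2
    have h2 : (0:ℝ) ≤ S n ω - S k ω := hωB
    simp only [Set.mem_setOf_eq]
    linarith
  have hae : {ω | ∃ i : Fin (n+1), a ≤ W (t i) ω}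
      =ᵐ[P] {ω | ∃ i : Fin (n+1), a ≤ S (i:ℕ) ω} := by
    filter_upwards [hW0] with ω hω
    have hSi : ∀ i : Fin (n+1), S (i:ℕ) ω = W (t i) ω := by
      intro i
      rw [htel (i:ℕ) i.is_le ω]
      have h1 : (⟨(i:ℕ), Nat.lt_succ_of_le i.is_le⟩ : Fin (n+1)) = i := by
        apply Fin.ext; rfl
      rw [h1, ht0, hω]
      ring
    simp only [eq_iff_iff, Set.mem_setOf_eq]
    constructor
    · rintro ⟨i, hi⟩; exact ⟨i, by rw [hSi i]; exact hi⟩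
    · rintro ⟨i, hi⟩; exact ⟨i, by rw [← hSi i]; exact hi⟩
  have hlast : P {ω | a ≤ S n ω} ≤ 2 * ENNReal.ofReal (Real.exp (-a^2/(2*τ))) := by
    have hfun : ∀ ω, S n ω = W (t (Fin.last n)) ω - W (t 0) ω := by
      intro ω
      rw [htel n le_rfl ω]
      rfl
    have hEq : {ω | a ≤ S n ω}
        = (fun ω => W (t (Fin.last n)) ω - W (t 0) ω) ⁻¹' (Set.Ici a) := by
      ext ω
      simp only [Set.mem_setOf_eq, Set.mem_preimage, Set.mem_Ici, hfun ω]
    have h0t : (0:ℝ) ≤ t 0 := le_of_eq ht0.symm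
    have h0l : t 0 ≤ t (Fin.last n) := hmono (Fin.zero_le _)
    rw [hEq, ← Measure.map_apply (f := fun ω => W (t (Fin.last n)) ω - W (t 0) ω) ((hWmeas _).sub (hWmeas _)) measurableSet_Ici,
      hWgauss _ _ h0t h0l]
    apply gauss_tail _ hτ _ ha
    rw [Real.coe_toNNReal']
    rw [ht0, sub_zero]
    exact max_le htn (le_of_lt hτ)
  calc P {ω | ∃ i : Fin (n+1), a ≤ W (t i) ω}
      = P {ω | ∃ i : Fin (n+1), a ≤ S (i:ℕ) ω} := measure_congr hae
    _ = ∑ k ∈ Finset.range (n+1), P (E k) := by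
        rw [hcover, measure_biUnion_finset hdisj (fun k _ => hEamb k)]
    _ ≤ ∑ k ∈ Finset.range (n+1), 2 * P (E k ∩ B k) := by
        apply Finset.sum_le_sum
        intro k hk
        exact hEk2 k (Nat.lt_succ_iff.mp (Finset.mem_range.mp hk))
    _ = 2 * ∑ k ∈ Finset.range (n+1), P (E k ∩ B k) := by rw [Finset.mul_sum]
    _ = 2 * P (⋃ k ∈ Finset.range (n+1), E k ∩ B k) := by
        rw [measure_biUnion_finset hdisj2 (fun k _ => (hEamb k).inter (hBamb k))]
    _ ≤ 2 * P {ω | a ≤ S n ω} := mul_le_mul_right (measure_mono hcover2) 2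
    _ ≤ 2 * (2 * ENNReal.ofReal (Real.exp (-a^2/(2*τ)))) := mul_le_mul_right hlast 2
    _ = 4 * ENNReal.ofReal (Real.exp (-a^2/(2*τ))) := by rw [← mul_assoc]; norm_num

lemma finite_max_tail {Ω : Type*} [MeasurableSpace Ω] (P : Measure Ω) [IsProbabilityMeasure P]
    (W : ℝ → Ω → ℝ)
    (hWmeas : ∀ t, Measurable (W t))
    (hW0 : ∀ᵐ ω ∂P, W 0 ω = 0)
    (hWindep : ∀ (n : ℕ) (t : Fin (n + 1) → ℝ), Monotone t → 0 ≤ t 0 →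
      iIndepFun
        (fun i : Fin n => fun ω => W (t i.succ) ω - W (t i.castSucc) ω) P)
    (hWgauss : ∀ s t : ℝ, 0 ≤ s → s ≤ t →
      P.map (fun ω => W t ω - W s ω) = gaussianReal 0 (t - s).toNNReal)
    {τ : ℝ} (hτ : 0 < τ) (e : ℕ → ℝ) (he : ∀ k, e k ∈ Set.Icc 0 τ) (N : ℕ)
    {a : ℝ} (ha : 0 < a) :
    P {ω | ∃ k ≤ N, a ≤ W (e k) ω} ≤ 4 * ENNReal.ofReal (Real.exp (-a^2/(2*τ))) := by
  classical
  set s : Finset ℝ := insert 0 ((Finset.range (N+1)).image e) with hs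
  have hsne : s.Nonempty := ⟨0, Finset.mem_insert_self _ _⟩
  obtain ⟨n, hn⟩ : ∃ n, s.card = n + 1 :=
    Nat.exists_eq_succ_of_ne_zero (Finset.card_ne_zero_of_mem (Finset.mem_insert_self 0 _))
  set t : Fin (n+1) → ℝ := fun i => (s.orderIsoOfFin hn i : ℝ) with ht
  have hmem : ∀ i, t i ∈ s := fun i => (s.orderIsoOfFin hn i).2
  have hsurj : ∀ x ∈ s, ∃ i, t i = x := by
    intro x hx
    exact ⟨(s.orderIsoOfFin hn).symm ⟨x, hx⟩, by
      simp only [ht]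
      rw [OrderIso.apply_symm_apply]⟩
  have hmono' : Monotone t := by
    intro i j hij
    exact Subtype.coe_le_coe.mpr ((s.orderIsoOfFin hn).monotone hij)
  have hbounds : ∀ x ∈ s, 0 ≤ x ∧ x ≤ τ := by
    intro x hx
    rcases Finset.mem_insert.mp hx with h0 | himg
    · subst h0; exact ⟨le_rfl, le_of_lt hτ⟩
    · obtain ⟨k, _, hk⟩ := Finset.mem_image.mp himg
      subst hk
      exact ⟨(he k).1, (he k).2⟩
  have ht0 : t 0 = 0 := by
    obtain ⟨i0, hi0⟩ := hsurj 0 (Finset.mem_insert_self 0 _)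
    have h1 : t 0 ≤ t i0 := hmono' (Fin.zero_le i0)
    rw [hi0] at h1
    exact le_antisymm h1 (hbounds _ (hmem 0)).1
  have htn : t (Fin.last n) ≤ τ := (hbounds _ (hmem (Fin.last n))).2
  have hsub : {ω | ∃ k ≤ N, a ≤ W (e k) ω} ⊆ {ω | ∃ i, a ≤ W (t i) ω} := by
    intro ω hω
    obtain ⟨k, hk, hka⟩ := hω
    have hmem' : e k ∈ s :=
      Finset.mem_insert_of_mem (Finset.mem_image_of_mem e (Finset.mem_range.mpr
        (Nat.lt_succ_of_le hk)))
    obtain ⟨i, hi⟩ := hsurj _ hmem'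
    exact ⟨i, by rw [hi]; exact hka⟩
  exact le_trans (measure_mono hsub)
    (levy_tail P W hWmeas hW0 hWindep hWgauss hτ n t hmono' ht0 htn ha)

lemma sup_exp_moment {Ω : Type*} [MeasurableSpace Ω] (P : Measure Ω) [IsProbabilityMeasure P]
    (W : ℝ → Ω → ℝ)
    (hWmeas : ∀ t, Measurable (W t))
    (hW0 : ∀ᵐ ω ∂P, W 0 ω = 0)
    (hWindep : ∀ (n : ℕ) (t : Fin (n + 1) → ℝ), Monotone t → 0 ≤ t 0 →
      iIndepFun
        (fun i : Fin n => fun ω => W (t i.succ) ω - W (t i.castSucc) ω) P)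
    (hWgauss : ∀ s t : ℝ, 0 ≤ s → s ≤ t →
      P.map (fun ω => W t ω - W s ω) = gaussianReal 0 (t - s).toNNReal)
    {τ : ℝ} (hτ : 0 < τ) (e : ℕ → ℝ) (he : ∀ k, e k ∈ Set.Icc 0 τ) (b c : ℝ) :
    ∫⁻ ω, (⨆ k, ENNReal.ofReal (Real.exp (b * W (e k) ω + c * e k))) ∂P < ⊤ := by
  classical
  set g : ℕ → Ω → ℝ := fun k ω => Real.exp (b * W (e k) ω + c * e k) with hgdef
  have hgmeas : ∀ k, Measurable (g k) :=
    fun k => (((hWmeas (e k)).const_mul b).add_const (c * e k)).exp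
  have hgpos : ∀ k ω, 0 < g k ω := fun k ω => Real.exp_pos _
  have hrangene : ∀ N : ℕ, (Finset.range (N+1)).Nonempty := fun N => ⟨0, by simp⟩
  set F : ℕ → Ω → ℝ := fun N ω => (Finset.range (N+1)).sup' (hrangene N) (fun k => g k ω)
    with hFdef
  have hFmeas : ∀ N, Measurable (F N) := by
    intro N
    have : F N = (Finset.range (N+1)).sup' (hrangene N) g := by
      funext ω
      rw [Finset.sup'_apply]
    rw [this]
    exact Finset.measurable_sup' _ (fun k _ => hgmeas k)
  have hFmono : ∀ ω, Monotone (fun N => F N ω) := by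
    intro ω N M hNM
    exact Finset.sup'_mono _ (Finset.range_subset_range.mpr (by omega)) _
  have hFpos : ∀ N ω, 0 < F N ω :=
    fun N ω => lt_of_lt_of_le (hgpos 0 ω)
      (Finset.le_sup' (f := fun j => g j ω) (Finset.mem_range.mpr (Nat.succ_pos N)))
  have hiSupEq : ∀ ω, (⨆ k, ENNReal.ofReal (g k ω)) = ⨆ N, ENNReal.ofReal (F N ω) := by
    intro ω
    apply le_antisymm
    · refine iSup_le fun k => le_iSup_of_le k (ENNReal.ofReal_le_ofReal ?_)
      exact Finset.le_sup' (f := fun j => g j ω) (Finset.mem_range.mpr (Nat.lt_succ_self k))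
    · refine iSup_le fun N => ?_
      obtain ⟨k, _, hk⟩ := Finset.exists_mem_eq_sup' (hrangene N) (fun k => g k ω)
      have : F N ω = g k ω := hk
      rw [this]
      exact le_iSup (fun k => ENNReal.ofReal (g k ω)) k
  -- constants
  set u0 : ℝ := 8 * |b| * τ + 8 * (|c| + 1) * τ + 1 with hu0def
  have hu0pos : 0 < u0 := by positivity
  set T : ℝ := Real.exp (|c| * τ + |b| * u0) with hTdef
  have hT0 : 0 < T := Real.exp_pos _
  -- the key tail bound, uniform in N
  have htail : ∀ N : ℕ, ∀ t : ℝ, T < t →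
      P {ω | t < F N ω} ≤ 4 * ENNReal.ofReal (t^(-2:ℝ)) := by
    intro N t ht
    have ht0 : (0:ℝ) < t := lt_trans hT0 ht
    have hlogT : Real.log T = |c| * τ + |b| * u0 := Real.log_exp _
    have hlogt : Real.log T < Real.log t := Real.log_lt_log hT0 ht
    by_cases hb0 : b = 0
    · have hFle : ∀ ω, F N ω ≤ T := by
        intro ω
        apply Finset.sup'_le
        intro k _
        rw [hgdef]
        simp only [hb0, zero_mul, zero_add]
        rw [hTdef]
        apply Real.exp_le_exp.mpr
        have h1 : c * e k ≤ |c| * e k := mul_le_mul_of_nonneg_right (le_abs_self c) (he k).1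
        have h2 : |c| * e k ≤ |c| * τ := mul_le_mul_of_nonneg_left (he k).2 (abs_nonneg c)
        have h3 : 0 ≤ |b| * u0 := mul_nonneg (abs_nonneg b) hu0pos.le
        linarith
      have hempty : {ω | t < F N ω} = ∅ := by
        ext ω
        simp only [Set.mem_setOf_eq, Set.mem_empty_iff_false, iff_false, not_lt]
        exact le_trans (hFle ω) ht.le
      rw [hempty]
      simp
    · have hbabs : 0 < |b| := abs_pos.mpr hb0
      set u : ℝ := (Real.log t - |c| * τ) / |b| with hudef
      have hbu : |b| * u = Real.log t - |c| * τ := by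
        rw [hudef]; field_simp
      have hu_gt : u0 < u := by
        rw [hudef, lt_div_iff₀ hbabs]
        nlinarith [hlogt, hlogT]
      have hu_pos : 0 < u := lt_trans hu0pos hu_gt
      have hsub : ∀ (V : ℝ → Ω → ℝ), (∀ r ω, b * W r ω = |b| * V r ω) →
          {ω | t < F N ω} ⊆ {ω | ∃ k ≤ N, u ≤ V (e k) ω} := by
        intro V hV ω hω
        have hω' : t < (Finset.range (N+1)).sup' (hrangene N) (fun k => g k ω) := hω
        rw [Finset.lt_sup'_iff] at hω'
        obtain ⟨k, hk, hgk⟩ := hω'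
        refine ⟨k, Nat.lt_succ_iff.mp (Finset.mem_range.mp hk), ?_⟩
        have h4 : Real.log t < b * W (e k) ω + c * e k := by
          have h5 := Real.log_lt_log ht0 hgk
          rwa [hgdef, Real.log_exp] at h5
        have h1 : c * e k ≤ |c| * τ :=
          le_trans (mul_le_mul_of_nonneg_right (le_abs_self c) (he k).1)
            (mul_le_mul_of_nonneg_left (he k).2 (abs_nonneg c))
        have h5 : |b| * u ≤ |b| * V (e k) ω := by
          rw [← hV, hbu]
          linarith
        exact le_of_mul_le_mul_left h5 hbabs
      have hexpineq : Real.exp (-u^2/(2*τ)) ≤ t^(-2:ℝ) := by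
        rw [Real.rpow_def_of_pos ht0]
        apply Real.exp_le_exp.mpr
        have hlt : Real.log t = |b| * u + |c| * τ := by rw [hbu]; ring
        rw [hlt]
        rw [div_le_iff₀ (by positivity : (0:ℝ) < 2*τ)]
        have hub : 8 * |b| * τ ≤ u := by
          have : 0 ≤ 8 * (|c| + 1) * τ := by positivity
          nlinarith [hu_gt]
        have huc : 8 * (|c| + 1) * τ ≤ u := by
          have : 0 ≤ 8 * |b| * τ := by positivity
          nlinarith [hu_gt]
        nlinarith [mul_le_mul_of_nonneg_left hub hu_pos.le,
          mul_le_mul_of_nonneg_left huc (by positivity : (0:ℝ) ≤ 8 * (|c| + 1) * τ),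
          abs_nonneg b, abs_nonneg c, hτ, mul_nonneg (abs_nonneg c) hτ.le]
      rcases Ne.lt_or_gt hb0 with hbneg | hbpos
      · -- b < 0 : use -W
        have hW'meas : ∀ r, Measurable ((fun r ω => -W r ω) r) := fun r => (hWmeas r).neg
        have hW'0 : ∀ᵐ ω ∂P, (fun r ω => -W r ω) 0 ω = 0 := by
          filter_upwards [hW0] with ω hω
          simp [hω]
        have hW'indep : ∀ (n : ℕ) (tt : Fin (n + 1) → ℝ), Monotone tt → 0 ≤ tt 0 →
            iIndepFun
              (fun i : Fin n => fun ω =>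
                (fun r ω => -W r ω) (tt i.succ) ω - (fun r ω => -W r ω) (tt i.castSucc) ω) P := by
          intro n tt hm h0
          have hrw : (fun i : Fin n => fun ω =>
                (fun r ω => -W r ω) (tt i.succ) ω - (fun r ω => -W r ω) (tt i.castSucc) ω)
              = fun i => (fun x : ℝ => -x) ∘ (fun ω => W (tt i.succ) ω - W (tt i.castSucc) ω) := by
            funext i ω
            simp [Function.comp]
            ring
          rw [hrw]
          exact (hWindep n tt hm h0).comp _ (fun i => measurable_neg)
        have hW'gauss : ∀ s r : ℝ, 0 ≤ s → s ≤ r →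
            P.map (fun ω => (fun r ω => -W r ω) r ω - (fun r ω => -W r ω) s ω)
              = gaussianReal 0 (r - s).toNNReal := by
          intro s r hs hsr
          have hrw : (fun ω => (fun r ω => -W r ω) r ω - (fun r ω => -W r ω) s ω)
              = fun ω => (-1:ℝ) * (W r ω - W s ω) := by
            funext ω; simp; ring
          rw [hrw]
          have h2 : (fun ω => (-1:ℝ) * (W r ω - W s ω))
              = (fun x : ℝ => (-1:ℝ) * x) ∘ (fun ω => W r ω - W s ω) := rfl
          rw [h2, ← Measure.map_map (f := fun ω => W r ω - W s ω) (measurable_const_mul (-1)) ((hWmeas r).sub (hWmeas s)),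
            hWgauss s r hs hsr, gaussianReal_map_const_mul]
          norm_num
        have key := finite_max_tail P (fun r ω => -W r ω) hW'meas hW'0 hW'indep hW'gauss hτ
          e he N hu_pos
        have hV : ∀ r ω, b * W r ω = |b| * ((fun r ω => -W r ω) r ω) := by
          intro r ω
          simp only
          rw [abs_of_neg hbneg]
          ring
        calc P {ω | t < F N ω} ≤ P {ω | ∃ k ≤ N, u ≤ (fun r ω => -W r ω) (e k) ω} :=
              measure_mono (hsub _ hV)
          _ ≤ 4 * ENNReal.ofReal (Real.exp (-u^2/(2*τ))) := key
          _ ≤ 4 * ENNReal.ofReal (t^(-2:ℝ)) :=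
              mul_le_mul_right (ENNReal.ofReal_le_ofReal hexpineq) 4
      · -- b > 0 : use W
        have key := finite_max_tail P W hWmeas hW0 hWindep hWgauss hτ e he N hu_pos
        have hV : ∀ r ω, b * W r ω = |b| * W r ω := by
          intro r ω
          rw [abs_of_pos hbpos]
        calc P {ω | t < F N ω} ≤ P {ω | ∃ k ≤ N, u ≤ W (e k) ω} := measure_mono (hsub _ hV)
          _ ≤ 4 * ENNReal.ofReal (Real.exp (-u^2/(2*τ))) := key
          _ ≤ 4 * ENNReal.ofReal (t^(-2:ℝ)) :=
              mul_le_mul_right (ENNReal.ofReal_le_ofReal hexpineq) 4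
  -- uniform bound on the truncated integrals
  have hbound : ∀ N, ∫⁻ ω, ENNReal.ofReal (F N ω) ∂P
      ≤ ENNReal.ofReal T + 4 * ∫⁻ t in Set.Ioi T, ENNReal.ofReal (t^(-2:ℝ)) := by
    intro N
    rw [lintegral_eq_lintegral_meas_lt P
      (Filter.Eventually.of_forall (fun ω => (hFpos N ω).le)) (hFmeas N).aemeasurable]
    have hsplit : Set.Ioi (0:ℝ) = Set.Ioc 0 T ∪ Set.Ioi T :=
      (Set.Ioc_union_Ioi_eq_Ioi hT0.le).symm
    rw [hsplit, lintegral_union measurableSet_Ioi (Set.Ioc_disjoint_Ioi le_rfl)]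
    have h1 : ∫⁻ t in Set.Ioc 0 T, P {ω | t < F N ω} ≤ ENNReal.ofReal T := by
      calc ∫⁻ t in Set.Ioc 0 T, P {ω | t < F N ω} ≤ ∫⁻ _ in Set.Ioc 0 T, 1 :=
            lintegral_mono (fun _ => prob_le_one)
        _ = ENNReal.ofReal T := by
            rw [setLIntegral_one, Real.volume_Ioc]
            norm_num
    have h2 : ∫⁻ t in Set.Ioi T, P {ω | t < F N ω}
        ≤ 4 * ∫⁻ t in Set.Ioi T, ENNReal.ofReal (t^(-2:ℝ)) := by
      rw [← lintegral_const_mul' 4 _ (by norm_num : (4:ℝ≥0∞) ≠ ⊤)]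
      exact lintegral_mono_ae ((ae_restrict_iff' measurableSet_Ioi).2
        (Filter.Eventually.of_forall (fun t htT => htail N t htT)))
    exact add_le_add h1 h2
  have hrpow : ∫⁻ t in Set.Ioi T, ENNReal.ofReal (t^(-2:ℝ)) < ⊤ := by
    have hint := integrableOn_Ioi_rpow_of_lt (by norm_num : (-2:ℝ) < -1) hT0
    refine lt_of_le_of_lt ?_ hint.2
    apply lintegral_mono
    intro t
    have h := ENNReal.ofReal_le_ofReal (le_abs_self (t ^ (-2:ℝ)))
    rw [← Real.norm_eq_abs, ofReal_norm] at h
    exact h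
  show ∫⁻ ω, (⨆ k, ENNReal.ofReal (g k ω)) ∂P < ⊤
  calc ∫⁻ ω, (⨆ k, ENNReal.ofReal (g k ω)) ∂P
      = ∫⁻ ω, (⨆ N, ENNReal.ofReal (F N ω)) ∂P := lintegral_congr (fun ω => hiSupEq ω)
    _ = ⨆ N, ∫⁻ ω, ENNReal.ofReal (F N ω) ∂P := by
        apply lintegral_iSup (fun N => (hFmeas N).ennreal_ofReal)
        intro N M hNM ω
        exact ENNReal.ofReal_le_ofReal (hFmono ω hNM)
    _ ≤ ENNReal.ofReal T + 4 * ∫⁻ t in Set.Ioi T, ENNReal.ofReal (t^(-2:ℝ)) := iSup_le hbound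
    _ < ⊤ := by
        apply ENNReal.add_lt_top.mpr
        exact ⟨ENNReal.ofReal_lt_top, ENNReal.mul_lt_top (by norm_num) hrpow⟩

lemma lint_exp_Ioi (A d z₀ : ℝ) (hd : 0 < d) :
    ∫⁻ z in Set.Ioi z₀, ENNReal.ofReal (A * Real.exp (-d * z)) < ⊤ := by
  have hint : IntegrableOn (fun z => A * Real.exp (-d*z)) (Set.Ioi z₀) :=
    (exp_neg_integrableOn_Ioi z₀ hd).const_mul A
  refine lt_of_le_of_lt ?_ hint.2
  apply lintegral_mono
  intro z
  have h := ENNReal.ofReal_le_ofReal (le_abs_self (A * Real.exp (-d*z)))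
  rw [← Real.norm_eq_abs, ofReal_norm] at h
  exact h

lemma lint_exp_Iic (A d z₀ : ℝ) (hd : 0 < d) :
    ∫⁻ z in Set.Iic z₀, ENNReal.ofReal (A * Real.exp (d * z)) < ⊤ := by
  have hmp : MeasurePreserving (fun z : ℝ => -z) volume volume :=
    Measure.measurePreserving_neg _
  have hemb : MeasurableEmbedding (fun z : ℝ => -z) :=
    (Homeomorph.neg ℝ).measurableEmbedding
  have hpre : (fun z : ℝ => -z) ⁻¹' (Set.Ici (-z₀)) = Set.Iic z₀ := by
    ext z; simp
  have h1 := hmp.setLIntegral_comp_preimage_emb hemb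
    (fun y => ENNReal.ofReal (A * Real.exp (-d * y))) (Set.Ici (-z₀))
  rw [hpre] at h1
  have h2 : ∀ z : ℝ, ENNReal.ofReal (A * Real.exp (-d * -z)) = ENNReal.ofReal (A * Real.exp (d * z)) := by
    intro z; rw [neg_mul_neg]
  simp only [h2] at h1
  rw [h1]
  have h3 : (volume : Measure ℝ).restrict (Set.Ici (-z₀)) = volume.restrict (Set.Ioi (-z₀)) :=
    (Measure.restrict_congr_set Ioi_ae_eq_Ici).symm
  rw [h3]
  exact lint_exp_Ioi A d (-z₀) hd

end AuxiliaryLemmas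

open scoped NNReal ENNReal in

/-- Brownian case of Theorem 4.1: for the geometric Brownian asset `e^{Z_s}`,
`Z_s = σW_s + μs`, a payoff functional `h` squeezed between the running infimum and
supremum and positively homogeneous, `C = E[h((e^{Z_s})_s)]`, and
`ε(x) = E[(h((x e^{Z_s})_s) - K)⁺] - C(x - K/C)⁺`, one has
`∫ |ε(e^z)| e^{μz/σ²} dz < ∞` (integrability condition (A2)). -/
theorem asian_type_payoff_integrability_BM
    {Ω : Type*} [MeasurableSpace Ω] (P : Measure Ω) [IsProbabilityMeasure P]
    (W : ℝ → Ω → ℝ)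
    (hWmeas : ∀ t, Measurable (W t))
    (hW0 : ∀ᵐ ω ∂P, W 0 ω = 0)
    (hWcont : ∀ᵐ ω ∂P, Continuous fun t => W t ω)
    (hWindep : ∀ (n : ℕ) (t : Fin (n + 1) → ℝ), Monotone t → 0 ≤ t 0 →
      iIndepFun
        (fun i : Fin n => fun ω => W (t i.succ) ω - W (t i.castSucc) ω) P)
    (hWgauss : ∀ s t : ℝ, 0 ≤ s → s ≤ t →
      P.map (fun ω => W t ω - W s ω) = gaussianReal 0 (t - s).toNNReal)
    (σ μ τ K : ℝ) (hσ : 0 < σ) (hτ : 0 < τ) (hK : 0 < K)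
    (h : (Set.Icc (0 : ℝ) τ → ℝ) → ℝ) (hmeas : Measurable h)
    (hbound : ∀ w : Set.Icc (0 : ℝ) τ → ℝ, Continuous w →
      sInf (Set.range w) ≤ h w ∧ h w ≤ sSup (Set.range w))
    (hhom : ∀ (a : ℝ) (w : Set.Icc (0 : ℝ) τ → ℝ), Continuous w →
      h (fun s => a * w s) = a * h w)
    (C : ℝ)
    (hC : C = ∫ ω, h (fun s => Real.exp (σ * W (s : ℝ) ω + μ * (s : ℝ))) ∂P)
    (ε : ℝ → ℝ)
    (hε : ∀ x > (0 : ℝ), ε x =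
      (∫ ω, max (h (fun s => x * Real.exp (σ * W (s : ℝ) ω + μ * (s : ℝ))) - K) 0 ∂P)
        - C * max (x - K / C) 0) :
    ∫⁻ z : ℝ, ENNReal.ofReal (|ε (Real.exp z)| * Real.exp (μ * z / σ ^ 2)) < ⊤ := by
  classical
  -- basic setup
  set ρ : ℝ := μ / σ^2 with hρdef
  set pq : ℕ := ⌈|ρ|⌉₊ + 1 with hpqdef
  have hpq : |ρ| + 1 ≤ (pq : ℝ) := by
    rw [hpqdef]
    push_cast
    have := Nat.le_ceil |ρ|
    linarith
  have hpq1 : 1 ≤ pq := Nat.le_add_left 1 _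
  set H : Ω → ℝ := fun ω => h (fun s : Set.Icc (0:ℝ) τ =>
    Real.exp (σ * W (s:ℝ) ω + μ * (s:ℝ))) with hHdef
  have hHmeas : Measurable H :=
    hmeas.comp (measurable_pi_lambda _
      (fun s => (((hWmeas (s:ℝ)).const_mul σ).add_const (μ * (s:ℝ))).exp))
  -- dense sequence in the time interval
  haveI hne : Nonempty (Set.Icc (0:ℝ) τ) := ⟨⟨0, le_rfl, hτ.le⟩⟩
  obtain ⟨u, hu⟩ := TopologicalSpace.exists_dense_seq (Set.Icc (0:ℝ) τ)
  set e : ℕ → ℝ := fun n => (u n : ℝ) with hedef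
  have he : ∀ n, e n ∈ Set.Icc 0 τ := fun n => (u n).2
  have hMom : ∀ b c : ℝ,
      ∫⁻ ω, (⨆ k, ENNReal.ofReal (Real.exp (b * W (e k) ω + c * e k))) ∂P < ⊤ :=
    fun b c => sup_exp_moment P W hWmeas hW0 hWindep hWgauss hτ e he b c
  -- continuity of the path functional
  have hwc : ∀ ω : Ω, Continuous (fun t => W t ω) →
      Continuous (fun s : Set.Icc (0:ℝ) τ => Real.exp (σ * W (s:ℝ) ω + μ * (s:ℝ))) := by
    intro ω hcont
    exact Real.continuous_exp.comp
      ((continuous_const.mul (hcont.comp continuous_subtype_val)).add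
        (continuous_const.mul continuous_subtype_val))
  -- density upper bound
  have hdense : ∀ (b c : ℝ) (ω : Ω), Continuous (fun t => W t ω) →
      ∀ s₀ : Set.Icc (0:ℝ) τ,
      ENNReal.ofReal (Real.exp (b * W (s₀:ℝ) ω + c * (s₀:ℝ)))
        ≤ ⨆ k, ENNReal.ofReal (Real.exp (b * W (e k) ω + c * e k)) := by
    intro b c ω hcont s₀
    have hφcont : Continuous (fun s : Set.Icc (0:ℝ) τ =>
        ENNReal.ofReal (Real.exp (b * W (s:ℝ) ω + c * (s:ℝ)))) := by
      apply ENNReal.continuous_ofReal.comp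
      exact Real.continuous_exp.comp
        ((continuous_const.mul (hcont.comp continuous_subtype_val)).add
          (continuous_const.mul continuous_subtype_val))
    obtain ⟨v, hvmem, hvtend⟩ := mem_closure_iff_seq_limit.mp (hu s₀)
    refine le_of_tendsto ((hφcont.tendsto s₀).comp hvtend) (Filter.Eventually.of_forall ?_)
    intro n
    obtain ⟨k, hk⟩ := hvmem n
    show ENNReal.ofReal (Real.exp (b * W ((v n : ℝ)) ω + c * (v n : ℝ)))
      ≤ ⨆ k, ENNReal.ofReal (Real.exp (b * W (e k) ω + c * e k))
    rw [← hk]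
    exact le_iSup (fun k => ENNReal.ofReal (Real.exp (b * W (e k) ω + c * e k))) k
  -- extremes of the path
  have hextreme : ∀ ω : Ω, Continuous (fun t => W t ω) →
      ∃ smax smin : Set.Icc (0:ℝ) τ,
        H ω ≤ Real.exp (σ * W (smax:ℝ) ω + μ * (smax:ℝ)) ∧
        Real.exp (σ * W (smin:ℝ) ω + μ * (smin:ℝ)) ≤ H ω := by
    intro ω hcont
    set w : Set.Icc (0:ℝ) τ → ℝ :=
      fun s => Real.exp (σ * W (s:ℝ) ω + μ * (s:ℝ)) with hwdef
    have hwcont : Continuous w := hwc ω hcont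
    obtain ⟨smax, -, hmax⟩ := isCompact_univ.exists_isMaxOn Set.univ_nonempty
      hwcont.continuousOn
    obtain ⟨smin, -, hmin⟩ := isCompact_univ.exists_isMinOn Set.univ_nonempty
      hwcont.continuousOn
    rw [isMaxOn_iff] at hmax
    rw [isMinOn_iff] at hmin
    have hsup : sSup (Set.range w) = w smax := by
      apply le_antisymm
      · exact csSup_le (Set.range_nonempty w)
          (by rintro x ⟨s, rfl⟩; exact hmax s (Set.mem_univ s))
      · exact le_csSup ⟨w smax, by rintro x ⟨s, rfl⟩; exact hmax s (Set.mem_univ s)⟩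
          (Set.mem_range_self smax)
    have hinf : sInf (Set.range w) = w smin := by
      apply le_antisymm
      · exact csInf_le ⟨w smin, by rintro x ⟨s, rfl⟩; exact hmin s (Set.mem_univ s)⟩
          (Set.mem_range_self smin)
      · exact le_csInf (Set.range_nonempty w)
          (by rintro x ⟨s, rfl⟩; exact hmin s (Set.mem_univ s))
    have hb := hbound w hwcont
    exact ⟨smax, smin, le_trans hb.2 (le_of_eq hsup), le_trans (le_of_eq hinf.symm) hb.1⟩
  -- a.e. bounds
  have haeH : ∀ᵐ ω ∂P, 0 < H ω ∧
      ENNReal.ofReal (H ω) ≤ (⨆ k, ENNReal.ofReal (Real.exp (σ * W (e k) ω + μ * e k))) ∧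
      ENNReal.ofReal ((H ω)^pq)
        ≤ (⨆ k, ENNReal.ofReal (Real.exp (((pq:ℝ)*σ) * W (e k) ω + ((pq:ℝ)*μ) * e k))) ∧
      ENNReal.ofReal (((H ω)⁻¹)^pq)
        ≤ (⨆ k, ENNReal.ofReal
            (Real.exp ((-((pq:ℝ)*σ)) * W (e k) ω + (-((pq:ℝ)*μ)) * e k))) := by
    filter_upwards [hWcont] with ω hcont
    obtain ⟨smax, smin, hHle, hHge⟩ := hextreme ω hcont
    have hminpos : 0 < Real.exp (σ * W (smin:ℝ) ω + μ * (smin:ℝ)) := Real.exp_pos _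
    have hHpos : 0 < H ω := lt_of_lt_of_le hminpos hHge
    refine ⟨hHpos, ?_, ?_, ?_⟩
    · refine le_trans (ENNReal.ofReal_le_ofReal ?_) (hdense σ μ ω hcont smax)
      exact hHle
    · refine le_trans (ENNReal.ofReal_le_ofReal ?_)
        (hdense ((pq:ℝ)*σ) ((pq:ℝ)*μ) ω hcont smax)
      calc (H ω)^pq ≤ (Real.exp (σ * W (smax:ℝ) ω + μ * (smax:ℝ)))^pq :=
            pow_le_pow_left₀ hHpos.le hHle pq
        _ = Real.exp (((pq:ℝ)*σ) * W (smax:ℝ) ω + ((pq:ℝ)*μ) * (smax:ℝ)) := by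
            rw [← Real.exp_nat_mul]
            congr 1
            ring
    · refine le_trans (ENNReal.ofReal_le_ofReal ?_)
        (hdense (-((pq:ℝ)*σ)) (-((pq:ℝ)*μ)) ω hcont smin)
      calc ((H ω)⁻¹)^pq
          ≤ ((Real.exp (σ * W (smin:ℝ) ω + μ * (smin:ℝ)))⁻¹)^pq := by
            apply pow_le_pow_left₀ (inv_nonneg.mpr hHpos.le)
            exact inv_anti₀ hminpos hHge
        _ = Real.exp ((-((pq:ℝ)*σ)) * W (smin:ℝ) ω + (-((pq:ℝ)*μ)) * (smin:ℝ)) := by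
            rw [← Real.exp_neg, ← Real.exp_nat_mul]
            congr 1
            ring
  -- integrability via domination
  have hIntOf : ∀ (f : Ω → ℝ), Measurable f → (∀ᵐ ω ∂P, 0 ≤ f ω) →
      ∀ (G : Ω → ℝ≥0∞), (∀ᵐ ω ∂P, ENNReal.ofReal (f ω) ≤ G ω) →
      (∫⁻ ω, G ω ∂P < ⊤) → Integrable f P := by
    intro f hf hfnn G hle hG
    refine ⟨hf.aestronglyMeasurable, ?_⟩
    show (∫⁻ ω, ‖f ω‖ₑ ∂P) < ⊤
    refine lt_of_le_of_lt (lintegral_mono_ae ?_) hG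
    filter_upwards [hle, hfnn] with ω h1 h2
    calc (‖f ω‖ₑ : ℝ≥0∞) = ENNReal.ofReal (f ω) := by
          rw [← ofReal_norm, Real.norm_eq_abs, abs_of_nonneg h2]
      _ ≤ G ω := h1
  have hIntH : Integrable H P :=
    hIntOf H hHmeas (haeH.mono fun ω hω => hω.1.le) _
      (haeH.mono fun ω hω => hω.2.1) (hMom σ μ)
  have hIntHp : Integrable (fun ω => (H ω)^pq) P :=
    hIntOf _ (hHmeas.pow_const pq)
      (haeH.mono fun ω hω => pow_nonneg hω.1.le pq) _
      (haeH.mono fun ω hω => hω.2.2.1) (hMom _ _)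
  have hIntHm : Integrable (fun ω => ((H ω)⁻¹)^pq) P :=
    hIntOf _ (hHmeas.inv.pow_const pq)
      (haeH.mono fun ω hω => pow_nonneg (inv_nonneg.mpr hω.1.le) pq) _
      (haeH.mono fun ω hω => hω.2.2.2) (hMom _ _)
  have hHnn : ∀ᵐ ω ∂P, 0 ≤ H ω := haeH.mono fun ω hω => hω.1.le
  have hCpos : 0 < C := by
    rw [hC, integral_pos_iff_support_of_nonneg_ae hHnn hIntH]
    have hsupp : ∀ᵐ ω ∂P, ω ∈ Function.support H :=
      haeH.mono fun ω hω => ne_of_gt hω.1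
    by_contra hle
    push_neg at hle
    have h0 : P (Function.support H) = 0 := le_antisymm hle zero_le
    have h1 : P {ω | ω ∉ Function.support H} = 0 := by
      exact ae_iff.mp hsupp
    have hcup : (Set.univ : Set Ω)
        ⊆ Function.support H ∪ {ω | ω ∉ Function.support H} := by
      intro ω _
      by_cases hω : ω ∈ Function.support H
      · exact Or.inl hω
      · exact Or.inr hω
    have h2 : (1:ℝ≥0∞) ≤ 0 := by
      calc (1:ℝ≥0∞) = P Set.univ := measure_univ.symm
        _ ≤ P (Function.support H) + P {ω | ω ∉ Function.support H} :=
            le_trans (measure_mono hcup) (measure_union_le _ _)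
        _ = 0 := by rw [h0, h1, add_zero]
    simp at h2
  set Cp : ℝ := ∫ ω, (H ω)^pq ∂P with hCpdef
  set Cm : ℝ := ∫ ω, ((H ω)⁻¹)^pq ∂P with hCmdef
  have hCpnn : 0 ≤ Cp :=
    integral_nonneg_of_ae (haeH.mono fun ω hω => pow_nonneg hω.1.le pq)
  have hCmnn : 0 ≤ Cm :=
    integral_nonneg_of_ae (haeH.mono fun ω hω => pow_nonneg (inv_nonneg.mpr hω.1.le) pq)
  have hPay : ∀ x : ℝ, 0 < x →
      (∫ ω, max (h (fun s => x * Real.exp (σ * W (s:ℝ) ω + μ * (s:ℝ))) - K) 0 ∂P)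
        = ∫ ω, max (x * H ω - K) 0 ∂P := by
    intro x hx
    apply integral_congr_ae
    filter_upwards [hWcont] with ω hcont
    have h2 : h (fun s : Set.Icc (0:ℝ) τ => x * Real.exp (σ * W (s:ℝ) ω + μ * (s:ℝ)))
        = x * H ω :=
      hhom x (fun s : Set.Icc (0:ℝ) τ => Real.exp (σ * W (s:ℝ) ω + μ * (s:ℝ))) (hwc ω hcont)
    rw [h2]
  have hIntMax : ∀ x : ℝ, 0 < x → Integrable (fun ω => max (x * H ω - K) 0) P := by
    intro x hx
    apply Integrable.mono' (hIntH.const_mul x)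
    · exact (((hHmeas.const_mul x).sub_const K).max measurable_const).aestronglyMeasurable
    · filter_upwards [hHnn] with ω hω
      rw [Real.norm_eq_abs, abs_of_nonneg (le_max_right _ _)]
      rcases le_total (x * H ω - K) 0 with h1 | h1
      · rw [max_eq_right h1]; positivity
      · rw [max_eq_left h1]; nlinarith [hK]
  have hIntMax2 : ∀ x : ℝ, 0 < x → Integrable (fun ω => max (K - x * H ω) 0) P := by
    intro x hx
    apply Integrable.mono' (integrable_const K)
    · exact ((measurable_const.sub (hHmeas.const_mul x)).max measurable_const).aestronglyMeasurable
    · filter_upwards [hHnn] with ω hω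
      rw [Real.norm_eq_abs, abs_of_nonneg (le_max_right _ _)]
      rcases le_total (K - x * H ω) 0 with h1 | h1
      · rw [max_eq_right h1]; exact hK.le
      · rw [max_eq_left h1]; nlinarith [mul_nonneg hx.le hω]
  -- left-side bound
  have hεleft : ∀ z : ℝ, Real.exp z ≤ K / C →
      |ε (Real.exp z)| ≤ (Cp / K^(pq-1)) * (Real.exp z)^pq := by
    intro z hxle
    set x := Real.exp z with hxdef
    have hx : 0 < x := Real.exp_pos z
    rw [hε x hx, hPay x hx]
    have hmax0 : max (x - K/C) 0 = 0 := max_eq_right (by linarith)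
    rw [hmax0, mul_zero, sub_zero]
    have hnn : 0 ≤ ∫ ω, max (x * H ω - K) 0 ∂P :=
      integral_nonneg (fun ω => le_max_right _ _)
    rw [abs_of_nonneg hnn]
    have hpt : ∀ᵐ ω ∂P, max (x * H ω - K) 0 ≤ (x^pq / K^(pq-1)) * (H ω)^pq := by
      filter_upwards [haeH] with ω hω
      have hy : 0 < H ω := hω.1
      rcases le_total (x * H ω) K with h1 | h1
      · rw [max_eq_right (by linarith)]
        positivity
      · rw [max_eq_left (by linarith)]
        have hxy : 0 < x * H ω := by positivity
        have h2 : K^(pq-1) ≤ (x * H ω)^(pq-1) := pow_le_pow_left₀ hK.le h1 _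
        have h3 : (x * H ω) * K^(pq-1) ≤ (x * H ω)^pq := by
          calc (x * H ω) * K^(pq-1) ≤ (x * H ω) * (x * H ω)^(pq-1) :=
                mul_le_mul_of_nonneg_left h2 hxy.le
            _ = (x * H ω)^(pq-1) * (x * H ω) := mul_comm _ _
            _ = (x * H ω)^(pq-1+1) := (pow_succ _ _).symm
            _ = (x * H ω)^pq := by rw [Nat.sub_add_cancel hpq1]
        have h5 : x * H ω ≤ (x * H ω)^pq / K^(pq-1) := by
          rw [le_div_iff₀ (by positivity)]
          exact h3
        calc x * H ω - K ≤ x * H ω := by linarith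
          _ ≤ (x * H ω)^pq / K^(pq-1) := h5
          _ = (x^pq / K^(pq-1)) * (H ω)^pq := by rw [mul_pow]; ring
    calc ∫ ω, max (x * H ω - K) 0 ∂P
        ≤ ∫ ω, (x^pq / K^(pq-1)) * (H ω)^pq ∂P :=
          integral_mono_ae (hIntMax x hx) (hIntHp.const_mul _) hpt
      _ = (x^pq / K^(pq-1)) * Cp := by rw [MeasureTheory.integral_const_mul]
      _ = (Cp / K^(pq-1)) * x^pq := by ring
  -- right-side bound
  have hεright : ∀ z : ℝ, K / C ≤ Real.exp z →
      |ε (Real.exp z)| ≤ (K^(pq+1) * Cm) * ((Real.exp z)⁻¹)^pq := by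
    intro z hxge
    set x := Real.exp z with hxdef
    have hx : 0 < x := Real.exp_pos z
    rw [hε x hx, hPay x hx]
    have hmax1 : C * max (x - K/C) 0 = x * C - K := by
      rw [max_eq_left (by linarith)]
      field_simp
    rw [hmax1]
    have hXC : x * C - K = ∫ ω, (x * H ω - K) ∂P := by
      rw [integral_sub (hIntH.const_mul x) (integrable_const K),
        MeasureTheory.integral_const_mul, integral_const]
      simp [hC]
    have hInt3 : Integrable (fun ω => x * H ω - K) P :=
      (hIntH.const_mul x).sub (integrable_const K)
    rw [hXC, ← integral_sub (hIntMax x hx) hInt3]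
    have hptid : ∀ ω : Ω, max (x * H ω - K) 0 - (x * H ω - K) = max (K - x * H ω) 0 := by
      intro ω
      rcases le_total (x * H ω - K) 0 with h1 | h1
      · rw [max_eq_right h1, max_eq_left (by linarith)]; ring
      · rw [max_eq_left h1, max_eq_right (by linarith)]; ring
    rw [integral_congr_ae (Filter.Eventually.of_forall hptid)]
    have hnn : 0 ≤ ∫ ω, max (K - x * H ω) 0 ∂P :=
      integral_nonneg (fun ω => le_max_right _ _)
    rw [abs_of_nonneg hnn]
    have hpt : ∀ᵐ ω ∂P, max (K - x * H ω) 0 ≤ (K^(pq+1) * (x⁻¹)^pq) * ((H ω)⁻¹)^pq := by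
      filter_upwards [haeH] with ω hω
      have hy : 0 < H ω := hω.1
      rcases le_total K (x * H ω) with h1 | h1
      · rw [max_eq_right (by linarith)]
        positivity
      · rw [max_eq_left (by linarith)]
        have hxy : 0 < x * H ω := by positivity
        have h1' : 1 ≤ K * (x * H ω)⁻¹ := by
          rw [← div_eq_mul_inv]
          exact (one_le_div hxy).mpr h1
        have h4 : (1:ℝ) ≤ (K * (x * H ω)⁻¹)^pq := by
          calc (1:ℝ) = 1^pq := (one_pow pq).symm
            _ ≤ (K * (x * H ω)⁻¹)^pq := pow_le_pow_left₀ zero_le_one h1' pq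
        have h3 : K ≤ K^(pq+1) * ((x * H ω)⁻¹)^pq := by
          calc K = K * 1 := (mul_one K).symm
            _ ≤ K * (K * (x * H ω)⁻¹)^pq := mul_le_mul_of_nonneg_left h4 hK.le
            _ = K^(pq+1) * ((x * H ω)⁻¹)^pq := by
                rw [mul_pow, pow_succ]
                ring
        calc K - x * H ω ≤ K := by linarith
          _ ≤ K^(pq+1) * ((x * H ω)⁻¹)^pq := h3
          _ = (K^(pq+1) * (x⁻¹)^pq) * ((H ω)⁻¹)^pq := by
              rw [mul_inv, mul_pow]
              ring
    calc ∫ ω, max (K - x * H ω) 0 ∂P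
        ≤ ∫ ω, (K^(pq+1) * (x⁻¹)^pq) * ((H ω)⁻¹)^pq ∂P :=
          integral_mono_ae (hIntMax2 x hx) (hIntHm.const_mul _) hpt
      _ = (K^(pq+1) * (x⁻¹)^pq) * Cm := by rw [MeasureTheory.integral_const_mul]
      _ = (K^(pq+1) * Cm) * (x⁻¹)^pq := by ring
  -- final assembly
  set z₀ : ℝ := Real.log (K / C) with hz₀def
  have hKC : 0 < K / C := div_pos hK hCpos
  have hexpz₀ : Real.exp z₀ = K / C := Real.exp_log hKC
  have hρabs : ρ ≤ |ρ| := le_abs_self ρ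
  have hρabs' : -|ρ| ≤ ρ := neg_abs_le ρ
  have hleftfin : ∫⁻ z in Set.Iic z₀,
      ENNReal.ofReal (|ε (Real.exp z)| * Real.exp (μ * z / σ^2)) < ⊤ := by
    have hmono : ∀ z ∈ Set.Iic z₀,
        ENNReal.ofReal (|ε (Real.exp z)| * Real.exp (μ * z / σ^2))
          ≤ ENNReal.ofReal ((Cp / K^(pq-1)) * Real.exp (((pq:ℝ) + ρ) * z)) := by
      intro z hz
      apply ENNReal.ofReal_le_ofReal
      have hxle : Real.exp z ≤ K / C := by
        rw [← hexpz₀]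
        exact Real.exp_le_exp.mpr hz
      have hb := hεleft z hxle
      have hρz : μ * z / σ^2 = ρ * z := by rw [hρdef]; ring
      calc |ε (Real.exp z)| * Real.exp (μ * z / σ^2)
          ≤ ((Cp / K^(pq-1)) * (Real.exp z)^pq) * Real.exp (μ * z / σ^2) :=
            mul_le_mul_of_nonneg_right hb (Real.exp_nonneg _)
        _ = (Cp / K^(pq-1)) * Real.exp (((pq:ℝ) + ρ) * z) := by
            rw [hρz, ← Real.exp_nat_mul, mul_assoc, ← Real.exp_add]
            congr 2
            ring
    refine lt_of_le_of_lt (lintegral_mono_ae ((ae_restrict_iff' measurableSet_Iic).2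
      (Filter.Eventually.of_forall hmono))) ?_
    exact lint_exp_Iic _ _ _ (by linarith)
  have hrightfin : ∫⁻ z in Set.Ioi z₀,
      ENNReal.ofReal (|ε (Real.exp z)| * Real.exp (μ * z / σ^2)) < ⊤ := by
    have hmono : ∀ z ∈ Set.Ioi z₀,
        ENNReal.ofReal (|ε (Real.exp z)| * Real.exp (μ * z / σ^2))
          ≤ ENNReal.ofReal ((K^(pq+1) * Cm) * Real.exp (-((pq:ℝ) - ρ) * z)) := by
      intro z hz
      apply ENNReal.ofReal_le_ofReal
      have hxge : K / C ≤ Real.exp z := by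
        rw [← hexpz₀]
        exact Real.exp_le_exp.mpr (le_of_lt hz)
      have hb := hεright z hxge
      have hρz : μ * z / σ^2 = ρ * z := by rw [hρdef]; ring
      calc |ε (Real.exp z)| * Real.exp (μ * z / σ^2)
          ≤ ((K^(pq+1) * Cm) * ((Real.exp z)⁻¹)^pq) * Real.exp (μ * z / σ^2) :=
            mul_le_mul_of_nonneg_right hb (Real.exp_nonneg _)
        _ = (K^(pq+1) * Cm) * Real.exp (-((pq:ℝ) - ρ) * z) := by
            rw [hρz, ← Real.exp_neg, ← Real.exp_nat_mul, mul_assoc, ← Real.exp_add]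
            congr 2
            ring
    refine lt_of_le_of_lt (lintegral_mono_ae ((ae_restrict_iff' measurableSet_Ioi).2
      (Filter.Eventually.of_forall hmono))) ?_
    exact lint_exp_Ioi _ _ _ (by linarith)
  have hsplit := lintegral_add_compl (μ := (volume : Measure ℝ))
    (fun z : ℝ => ENNReal.ofReal (|ε (Real.exp z)| * Real.exp (μ * z / σ^2)))
    (measurableSet_Iic (a := z₀))
  rw [← hsplit, Set.compl_Iic]
  exact ENNReal.add_lt_top.mpr ⟨hleftfin, hrightfin⟩
end
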